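/- arXiv:2509.26230 — 2 statements merged into one kernel-verified Lean document; each statement's English description precedes it below -/
import Mathlib

section
/- Let D ⊆ ℂⁿ be a ℂ-proper convex domain and let ξ ∈ ∂D be a point of locally finite type. Let φ, ψ : 𝔻 → D be complex geodesics with endpoint ξ. Then h_{ξ,φ(0)}(ψ(0)) = log(ψ'_N(1)/φ'_N(1)). In particular, if φ(0) = ψ(0) then φ'_N(1) = ψ'_N(1). -/
open Filter Topology Metric Set

noncomputable section

/-- `ℂⁿ` as a complex Euclidean space. -/
abbrev En (n : ℕ) := EuclideanSpace ℂ (Fin n)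

/-- The open unit disc in `ℂ`. -/
def unitDisc : Set ℂ := Metric.ball 0 1

/-- The Poincaré distance on the unit disc, normalized as
`ρ(ζ₁,ζ₂) = log((1+m)/(1−m))` with `m = |ζ₁−ζ₂|/|1−conj(ζ₂)ζ₁|`. -/
def poincareDist (ζ₁ ζ₂ : ℂ) : ℝ :=
  Real.log ((1 + ‖ζ₁ - ζ₂‖ / ‖1 - (starRingEnd ℂ) ζ₂ * ζ₁‖) /
    (1 - ‖ζ₁ - ζ₂‖ / ‖1 - (starRingEnd ℂ) ζ₂ * ζ₁‖))

/-- The (one-disc) Kobayashi distance of a (convex) domain `D`. -/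
def kob {E : Type*} [NormedAddCommGroup E] [NormedSpace ℂ E] (D : Set E) (z w : E) : ℝ :=
  sInf { c | ∃ φ : ℂ → E, DifferentiableOn ℂ φ unitDisc ∧ MapsTo φ unitDisc D ∧
    ∃ ζ₁ ∈ unitDisc, ∃ ζ₂ ∈ unitDisc, φ ζ₁ = z ∧ φ ζ₂ = w ∧ c = poincareDist ζ₁ ζ₂ }

/-- A `ℂ`-proper convex domain: nonempty, open, convex, containing no complex affine line. -/
def IsCProperConvex {E : Type*} [NormedAddCommGroup E] [NormedSpace ℂ E] (D : Set E) : Prop :=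
  D.Nonempty ∧ IsOpen D ∧ Convex ℝ D ∧ ¬ ∃ z v : E, v ≠ 0 ∧ ∀ ζ : ℂ, z + ζ • v ∈ D

/-- A complex geodesic of `D`: a holomorphic isometry from the Poincaré disc into `D`. -/
def IsComplexGeodesic {E : Type*} [NormedAddCommGroup E] [NormedSpace ℂ E]
    (D : Set E) (φ : ℂ → E) : Prop :=
  DifferentiableOn ℂ φ unitDisc ∧ MapsTo φ unitDisc D ∧
    ∀ ζ₁ ∈ unitDisc, ∀ ζ₂ ∈ unitDisc, kob D (φ ζ₁) (φ ζ₂) = poincareDist ζ₁ ζ₂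

/-- `φ` has endpoint `ξ`: `φ(t) → ξ` as `t → 1⁻` along the real axis. -/
def HasEndpoint {E : Type*} [NormedAddCommGroup E] [NormedSpace ℂ E]
    (φ : ℂ → E) (ξ : E) : Prop :=
  Tendsto (fun t : ℝ => φ (t : ℂ)) (𝓝[<] (1 : ℝ)) (𝓝 ξ)

/-- The standard Hermitian product `⟨z,w⟩ = Σ_j z_j conj(w_j)` on `ℂⁿ`. -/
def herm {n : ℕ} (z w : En n) : ℂ := ∑ j, z j * (starRingEnd ℂ) (w j)

/-- The Stolz region at `σ ∈ ∂𝔻` with aperture `M`. -/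
def stolzAt (σ : ℂ) (M : ℝ) : Set ℂ :=
  {ζ ∈ unitDisc | ‖σ - ζ‖ < M * (1 - ‖ζ‖)}

/-- Non-tangential (angular) limit of `g` at `σ ∈ ∂𝔻`: limit within every Stolz region. -/
def NTLim {α : Type*} [TopologicalSpace α] (g : ℂ → α) (σ : ℂ) (a : α) : Prop :=
  ∀ M : ℝ, 1 < M → Tendsto g (𝓝[stolzAt σ M] σ) (𝓝 a)

/-- `ξ ∈ ∂D` is a point of locally finite type: near `ξ` the boundary is `C^L`-smooth
(with a `C^L` local defining function with nonvanishing differential) and the order of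
vanishing of the defining function along every complex line through a nearby boundary
point is at most `L`. -/
def IsLocallyFiniteType {n : ℕ} (D : Set (En n)) (ξ : En n) : Prop :=
  ξ ∈ frontier D ∧ ∃ L : ℕ, 2 ≤ L ∧ ∃ U : Set (En n), IsOpen U ∧ ξ ∈ U ∧
    ∃ r : En n → ℝ, ContDiffOn ℝ L r U ∧ (∀ x ∈ U, (x ∈ D ↔ r x < 0)) ∧
      (∀ x ∈ frontier D ∩ U, fderiv ℝ r x ≠ 0) ∧
      (∀ η ∈ frontier D ∩ U, ∀ v : En n, v ≠ 0 →
        ¬ (fun ζ : ℂ => r (η + ζ • v)) =o[𝓝 (0 : ℂ)] fun ζ : ℂ => ‖ζ‖ ^ L)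

/-- `nor` is the outer unit normal of the convex domain `D` at `ξ ∈ ∂D`:
a unit vector whose associated real supporting hyperplane at `ξ` keeps `D` strictly
on its negative side. -/
def IsOuterUnitNormal {n : ℕ} (D : Set (En n)) (ξ nor : En n) : Prop :=
  ‖nor‖ = 1 ∧ ∀ z ∈ D, (herm (z - ξ) nor).re < 0

/-- `Ω` is the pluricomplex Poisson kernel of `D` at `ξ` (with outer unit normal `nor`):
`Ω(z) = −1/φ'_N(1)` for any complex geodesic `φ` with `φ(0) = z` and endpoint `ξ`, where
`φ'_N(1)` is the non-tangential limit of `⟨φ'(ζ), n_ξ⟩` at `1`. -/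
def IsPoissonKernel {n : ℕ} (D : Set (En n)) (ξ nor : En n) (Ω : En n → ℝ) : Prop :=
  ∀ z ∈ D, ∀ φ : ℂ → En n, IsComplexGeodesic D φ → φ 0 = z → HasEndpoint φ ξ →
    ∀ a : ℝ, 0 < a → NTLim (fun ζ => herm (deriv φ ζ) nor) 1 (a : ℂ) → Ω z = -1 / a

/-- `h` is the horofunction of `D` with center `ξ` and base-point `p`:
`h(z) = lim_{w→ξ} [k_D(z,w) − k_D(w,p)]`. -/
def IsHorofunction {n : ℕ} (D : Set (En n)) (ξ p : En n) (h : En n → ℝ) : Prop :=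
  ∀ z ∈ D, Tendsto (fun w => kob D z w - kob D w p) (𝓝[D] ξ) (𝓝 (h z))

/-- Euclidean distance to the boundary of `D`. -/
def deltaD {E : Type*} [NormedAddCommGroup E] [NormedSpace ℂ E] (D : Set E) (z : E) : ℝ :=
  Metric.infDist z (frontier D)

/-! ### Auxiliary development -/

namespace StmtAux

open Complex

local notation "conj'" => starRingEnd ℂ

lemma normSq_key (a b : ℂ) :
    Complex.normSq (1 - conj' a * b) - Complex.normSq (b - a)
      = (1 - Complex.normSq a) * (1 - Complex.normSq b) := by
  simp only [Complex.normSq_apply, Complex.sub_re, Complex.sub_im, Complex.mul_re,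
    Complex.mul_im, Complex.one_re, Complex.one_im, Complex.conj_re, Complex.conj_im]
  ring

lemma abs_sub_lt_abs_one_sub {a b : ℂ} (ha : ‖a‖ < 1) (hb : ‖b‖ < 1) :
    ‖b - a‖ < ‖1 - conj' a * b‖ := by
  have h1 : Complex.normSq (b - a) < Complex.normSq (1 - conj' a * b) := by
    have := normSq_key a b
    have ha2 : Complex.normSq a < 1 := by
      rw [← Complex.sq_norm]; nlinarith [norm_nonneg a]
    have hb2 : Complex.normSq b < 1 := by
      rw [← Complex.sq_norm]; nlinarith [norm_nonneg b]
    nlinarith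
  have := Real.sqrt_lt_sqrt (Complex.normSq_nonneg _) h1
  simpa [Complex.norm_def] using this

lemma one_sub_ne_zero_of_abs_lt {x : ℂ} (hx : ‖x‖ < 1) : (1 : ℂ) - x ≠ 0 := by
  intro h
  have : x = 1 := by linear_combination -h
  rw [this] at hx; simp at hx

/-- pseudo-hyperbolic quantity `m`. -/
def mh (z₁ z₂ : ℂ) : ℝ := ‖z₁ - z₂‖ / ‖1 - conj' z₂ * z₁‖

lemma poincareDist_eq (z₁ z₂ : ℂ) :
    poincareDist z₁ z₂ = Real.log ((1 + mh z₁ z₂) / (1 - mh z₁ z₂)) := rfl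

lemma mh_nonneg (z₁ z₂ : ℂ) : 0 ≤ mh z₁ z₂ := by
  unfold mh; positivity

lemma mh_lt_one {z₁ z₂ : ℂ} (h1 : ‖z₁‖ < 1) (h2 : ‖z₂‖ < 1) :
    mh z₁ z₂ < 1 := by
  unfold mh
  have h := abs_sub_lt_abs_one_sub h2 h1
  have hd : 0 < ‖1 - conj' z₂ * z₁‖ :=
    lt_of_le_of_lt (norm_nonneg _) h
  rw [div_lt_one hd]; exact h

lemma log_ratio_mono {m₁ m₂ : ℝ} (h0 : 0 ≤ m₁) (h12 : m₁ ≤ m₂) (h2 : m₂ < 1) :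
    Real.log ((1 + m₁) / (1 - m₁)) ≤ Real.log ((1 + m₂) / (1 - m₂)) := by
  have h1 : m₁ < 1 := lt_of_le_of_lt h12 h2
  apply Real.log_le_log (by apply div_pos <;> linarith)
  rw [div_le_div_iff₀ (by linarith) (by linarith)]
  nlinarith

/-- Möbius transformation of the disc. -/
def mob (c z : ℂ) : ℂ := (z - c) / (1 - conj' c * z)

lemma abs_mob_lt_one {c z : ℂ} (hc : ‖c‖ < 1) (hz : ‖z‖ < 1) :
    ‖mob c z‖ < 1 := by
  unfold mob
  have h := abs_sub_lt_abs_one_sub hc hz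
  have hd : 0 < ‖1 - conj' c * z‖ := lt_of_le_of_lt (norm_nonneg _) h
  rw [norm_div, div_lt_one hd]; exact h

lemma one_sub_conj_mul_ne {c z : ℂ} (hc : ‖c‖ < 1) (hz : ‖z‖ < 1) :
    (1 : ℂ) - conj' c * z ≠ 0 := by
  apply one_sub_ne_zero_of_abs_lt
  rw [norm_mul, Complex.norm_conj]
  nlinarith [norm_nonneg c, norm_nonneg z]

lemma mob_inv {c z : ℂ} (hc : ‖c‖ < 1) (hz : ‖z‖ < 1) :
    mob (-c) (mob c z) = z := by
  have d1 : (1 : ℂ) - conj' c * z ≠ 0 := one_sub_conj_mul_ne hc hz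
  have d2 : (1 : ℂ) - conj' c * c ≠ 0 := by
    apply one_sub_ne_zero_of_abs_lt
    rw [norm_mul, Complex.norm_conj]; nlinarith [norm_nonneg c]
  unfold mob
  rw [map_neg, sub_neg_eq_add, neg_mul, sub_neg_eq_add]
  have e1 : (z - c) / (1 - conj' c * z) + c = z * (1 - conj' c * c) / (1 - conj' c * z) := by
    rw [div_add' _ _ _ d1]; congr 1; ring
  have e2 : (1 : ℂ) + conj' c * ((z - c) / (1 - conj' c * z))
      = (1 - conj' c * c) / (1 - conj' c * z) := by
    field_simp; ring
  have aux : ∀ X Y d : ℂ, d ≠ 0 → Y ≠ 0 → (X * Y / d) / (Y / d) = X := by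
    intros X Y d hd hY; field_simp
  rw [e1, e2, aux z _ _ d1 d2]

lemma mob_zero (c : ℂ) : mob (-c) 0 = c := by
  unfold mob; simp

lemma mob_self (c : ℂ) : mob c c = 0 := by
  unfold mob; simp

lemma mob_differentiableAt {c z : ℂ} (h : (1 : ℂ) - conj' c * z ≠ 0) :
    DifferentiableAt ℂ (mob c) z := by
  refine DifferentiableAt.div ?_ ?_ h
  · exact differentiableAt_fun_id.sub_const c
  · exact (differentiableAt_fun_id.const_mul (conj' c)).const_sub 1

lemma abs_one_sub_conj_comm (x y : ℂ) :
    ‖1 - conj' x * y‖ = ‖1 - conj' y * x‖ := by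
  rw [← Complex.norm_conj (1 - conj' y * x)]
  congr 1
  simp [map_sub, map_mul, Complex.conj_conj, mul_comm]

lemma abs_mob_eq_mh (c z : ℂ) : ‖mob c z‖ = mh z c := by
  unfold mob mh
  rw [norm_div, abs_one_sub_conj_comm]

lemma mh_comm (x y : ℂ) : mh x y = mh y x := by
  unfold mh
  rw [show ‖x - y‖ = ‖y - x‖ by rw [← neg_sub, norm_neg],
    abs_one_sub_conj_comm]

/-- Schwarz–Pick lemma. -/
lemma schwarz_pick {f : ℂ → ℂ} (hd : DifferentiableOn ℂ f (ball 0 1))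
    (hm : MapsTo f (ball 0 1) (ball 0 1)) {ζ₁ ζ₂ : ℂ}
    (h1 : ζ₁ ∈ ball (0 : ℂ) 1) (h2 : ζ₂ ∈ ball (0 : ℂ) 1) :
    poincareDist (f ζ₁) (f ζ₂) ≤ poincareDist ζ₁ ζ₂ := by
  have h1' : ‖ζ₁‖ < 1 := by simpa using mem_ball_zero_iff.1 h1
  have h2' : ‖ζ₂‖ < 1 := by simpa using mem_ball_zero_iff.1 h2
  have hf1 : ‖f ζ₁‖ < 1 := by
    simpa using mem_ball_zero_iff.1 (hm h1)
  have hf2 : ‖f ζ₂‖ < 1 := by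
    simpa using mem_ball_zero_iff.1 (hm h2)
  set g : ℂ → ℂ := fun w => mob (f ζ₁) (f (mob (-ζ₁) w)) with hg
  have habs : ∀ w : ℂ, ‖w‖ < 1 → ‖mob (-ζ₁) w‖ < 1 := by
    intro w hw
    have : ‖-ζ₁‖ < 1 := by simpa using h1'
    exact abs_mob_lt_one this hw
  have hgd : DifferentiableOn ℂ g (ball 0 1) := by
    intro w hw
    have hw' : ‖w‖ < 1 := by simpa using mem_ball_zero_iff.1 hw
    have hmw : ‖mob (-ζ₁) w‖ < 1 := habs w hw'
    have d1 : DifferentiableAt ℂ (mob (-ζ₁)) w := by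
      apply mob_differentiableAt
      apply one_sub_ne_zero_of_abs_lt
      rw [norm_mul, Complex.norm_conj, norm_neg]
      nlinarith [norm_nonneg ζ₁, norm_nonneg w]
    have d2 : DifferentiableAt ℂ f (mob (-ζ₁) w) := by
      apply hd.differentiableAt
      exact isOpen_ball.mem_nhds (by simpa [mem_ball_zero_iff] using hmw)
    have hfmw : ‖f (mob (-ζ₁) w)‖ < 1 := by
      have : mob (-ζ₁) w ∈ ball (0:ℂ) 1 := by
        simpa [mem_ball_zero_iff] using hmw
      simpa using mem_ball_zero_iff.1 (hm this)
    have d3 : DifferentiableAt ℂ (mob (f ζ₁)) (f (mob (-ζ₁) w)) :=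
      mob_differentiableAt (one_sub_conj_mul_ne hf1 hfmw)
    exact (DifferentiableAt.comp w d3 (DifferentiableAt.comp w d2 d1)).differentiableWithinAt
  have hgm : MapsTo g (ball 0 1) (ball 0 1) := by
    intro w hw
    have hw' : ‖w‖ < 1 := by simpa using mem_ball_zero_iff.1 hw
    have hmw : ‖mob (-ζ₁) w‖ < 1 := habs w hw'
    have : mob (-ζ₁) w ∈ ball (0:ℂ) 1 := by
      simpa [mem_ball_zero_iff] using hmw
    have hfmw : ‖f (mob (-ζ₁) w)‖ < 1 := by
      simpa using mem_ball_zero_iff.1 (hm this)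
    have := abs_mob_lt_one hf1 hfmw
    simpa [mem_ball_zero_iff] using this
  have hg0 : g 0 = 0 := by
    simp only [hg]
    rw [mob_zero, mob_self]
  have hz : mob ζ₁ ζ₂ ∈ ball (0 : ℂ) 1 := by
    have := abs_mob_lt_one h1' h2'
    simpa [mem_ball_zero_iff] using this
  have key := Complex.dist_le_dist_of_mapsTo_ball hgd
    (by rw [hg0]; exact hgm.mono_right ball_subset_closedBall) hz
  rw [hg0] at key
  have hgz : g (mob ζ₁ ζ₂) = mob (f ζ₁) (f ζ₂) := by
    simp only [hg]
    rw [mob_inv h1' h2']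
  rw [hgz] at key
  have key' : ‖mob (f ζ₁) (f ζ₂)‖ ≤ ‖mob ζ₁ ζ₂‖ := by
    simpa [dist_zero_right] using key
  rw [abs_mob_eq_mh, abs_mob_eq_mh] at key'
  rw [poincareDist_eq, poincareDist_eq]
  rw [mh_comm (f ζ₂) (f ζ₁), mh_comm ζ₂ ζ₁] at key'
  exact log_ratio_mono (mh_nonneg _ _) key' (mh_lt_one h1' h2')


/-! ### Cayley transform -/

/-- Cayley transform from the left half-plane to the unit disc. -/
def cay (u : ℂ) : ℂ := (1 + u) / (1 - u)

lemma normSq_cay_key (u : ℂ) :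
    Complex.normSq (1 + u) - Complex.normSq (1 - u) = 4 * u.re := by
  simp only [Complex.normSq_apply, Complex.add_re, Complex.add_im, Complex.sub_re,
    Complex.sub_im, Complex.one_re, Complex.one_im]
  ring

lemma one_sub_ne_of_re_neg {u : ℂ} (hu : u.re < 0) : (1 : ℂ) - u ≠ 0 := by
  intro h
  have : (1 - u).re = 0 := by rw [h]; simp
  simp only [Complex.sub_re, Complex.one_re] at this
  linarith

lemma abs_cay_lt_one {u : ℂ} (hu : u.re < 0) : ‖cay u‖ < 1 := by
  unfold cay
  rw [norm_div, div_lt_one]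
  · have h := normSq_cay_key u
    have h1 : Complex.normSq (1 + u) < Complex.normSq (1 - u) := by nlinarith
    have := Real.sqrt_lt_sqrt (Complex.normSq_nonneg _) h1
    simpa [Complex.norm_def] using this
  · exact norm_pos_iff.2 (one_sub_ne_of_re_neg hu)

lemma normSq_halfplane_key (u v : ℂ) :
    Complex.normSq (u + conj' v) - Complex.normSq (u - v) = 4 * u.re * v.re := by
  simp only [Complex.normSq_apply, Complex.add_re, Complex.add_im, Complex.sub_re,
    Complex.sub_im, Complex.conj_re, Complex.conj_im]
  ring

lemma abs_sub_lt_abs_add_conj {u v : ℂ} (hu : u.re < 0) (hv : v.re < 0) :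
    ‖u - v‖ < ‖u + conj' v‖ := by
  have h := normSq_halfplane_key u v
  have h1 : Complex.normSq (u - v) < Complex.normSq (u + conj' v) := by nlinarith
  have := Real.sqrt_lt_sqrt (Complex.normSq_nonneg _) h1
  simpa [Complex.norm_def] using this

lemma add_conj_ne {u v : ℂ} (hu : u.re < 0) (hv : v.re < 0) : u + conj' v ≠ 0 := by
  intro h
  have : (u + conj' v).re = 0 := by rw [h]; simp
  simp only [Complex.add_re, Complex.conj_re] at this
  linarith

/-- Explicit formula for the Poincaré distance of two Cayley images. -/
lemma poincareDist_cay {u v : ℂ} (hu : u.re < 0) (hv : v.re < 0) :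
    poincareDist (cay u) (cay v)
      = Real.log ((‖u + conj' v‖ + ‖u - v‖) /
          (‖u + conj' v‖ - ‖u - v‖)) := by
  have nu : (1 : ℂ) - u ≠ 0 := one_sub_ne_of_re_neg hu
  have nv : (1 : ℂ) - v ≠ 0 := one_sub_ne_of_re_neg hv
  have ncv : (1 : ℂ) - conj' v ≠ 0 := by
    intro hcv
    apply nv
    have := congrArg conj' hcv
    simpa [map_sub] using this
  have e1 : cay u - cay v = 2 * (u - v) / ((1 - u) * (1 - v)) := by
    unfold cay; field_simp; ring
  have e2 : 1 - conj' (cay v) * cay u = (-2) * (u + conj' v) / ((1 - conj' v) * (1 - u)) := by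
    unfold cay
    rw [map_div₀, map_add, map_sub, map_one]
    field_simp; ring
  have habs1 : ‖cay u - cay v‖
      = 2 * ‖u - v‖ / (‖1 - u‖ * ‖1 - v‖) := by
    rw [e1, norm_div, norm_mul, norm_mul]
    norm_num
  have habs2 : ‖1 - conj' (cay v) * cay u‖
      = 2 * ‖u + conj' v‖ / (‖1 - v‖ * ‖1 - u‖) := by
    rw [e2, norm_div, norm_mul, norm_mul]
    have : ‖1 - conj' v‖ = ‖1 - v‖ := by
      rw [show (1 : ℂ) - conj' v = conj' (1 - v) by rw [map_sub, map_one], Complex.norm_conj]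
    rw [this, show ‖(-2 : ℂ)‖ = 2 by rw [norm_neg]; exact Complex.norm_two]
  have hau : 0 < ‖1 - u‖ := norm_pos_iff.2 nu
  have hav : 0 < ‖1 - v‖ := norm_pos_iff.2 nv
  have hA : 0 < ‖u + conj' v‖ := norm_pos_iff.2 (add_conj_ne hu hv)
  have hAB : ‖u - v‖ < ‖u + conj' v‖ := abs_sub_lt_abs_add_conj hu hv
  have hmh : mh (cay u) (cay v) = ‖u - v‖ / ‖u + conj' v‖ := by
    unfold mh
    rw [habs1, habs2]
    field_simp
  rw [poincareDist_eq, hmh]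
  congr 1
  have hBA : ‖u - v‖ / ‖u + conj' v‖ < 1 :=
    (div_lt_one hA).2 hAB
  rw [div_eq_div_iff (by linarith) (by linarith)]
  field_simp

/-! ### the radial Poincaré distance -/

/-- `rr t = log((1+t)/(1-t))`. -/
def rr (t : ℝ) : ℝ := Real.log ((1 + t) / (1 - t))

lemma poincareDist_zero_right {t : ℝ} (h0 : 0 ≤ t) (h1 : t < 1) :
    poincareDist 0 (t : ℂ) = rr t := by
  rw [poincareDist_eq]
  unfold mh rr
  rw [zero_sub, norm_neg, mul_zero, sub_zero, norm_one, Complex.norm_real, Real.norm_eq_abs,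
    _root_.abs_of_nonneg h0, div_one]

lemma poincareDist_zero_left {t : ℝ} (h0 : 0 ≤ t) (h1 : t < 1) :
    poincareDist (t : ℂ) 0 = rr t := by
  rw [poincareDist_eq]
  unfold mh rr
  rw [sub_zero, map_zero, zero_mul, sub_zero, norm_one, div_one, Complex.norm_real, Real.norm_eq_abs,
    _root_.abs_of_nonneg h0]

lemma poincareDist_radial {σ s : ℝ} (h0 : 0 ≤ σ) (hσs : σ ≤ s) (h1 : s < 1) :
    poincareDist (σ : ℂ) (s : ℂ) = rr s - rr σ := by
  have hσ1 : σ < 1 := lt_of_le_of_lt hσs h1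
  rw [poincareDist_eq]
  have hm : mh (σ : ℂ) (s : ℂ) = (s - σ) / (1 - s * σ) := by
    unfold mh
    rw [show ((σ:ℂ) - (s:ℂ)) = (((σ - s : ℝ)) : ℂ) by push_cast; ring]
    rw [show (1 : ℂ) - conj' (s:ℂ) * (σ:ℂ) = (((1 - s * σ : ℝ)) : ℂ) by
      rw [Complex.conj_ofReal]; push_cast; ring]
    rw [Complex.norm_real, Real.norm_eq_abs, Complex.norm_real, Real.norm_eq_abs]
    rw [abs_of_nonpos (by linarith), abs_of_pos (by nlinarith)]
    ring_nf
  rw [hm]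
  have hden : 0 < 1 - s * σ := by nlinarith
  have e : (1 + (s - σ) / (1 - s * σ)) / (1 - (s - σ) / (1 - s * σ))
      = ((1 + s) * (1 - σ)) / ((1 - s) * (1 + σ)) := by
    have hm1 : (s - σ) / (1 - s * σ) < 1 := by rw [div_lt_one hden]; nlinarith
    rw [div_eq_div_iff (by linarith) (by nlinarith)]
    field_simp
    ring
  rw [e]
  unfold rr
  have p1 : (0:ℝ) < 1 + s := by linarith
  have p2 : (0:ℝ) < 1 - s := by linarith
  have p3 : (0:ℝ) < 1 + σ := by linarith
  have p4 : (0:ℝ) < 1 - σ := by linarith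
  rw [Real.log_div (ne_of_gt (mul_pos p1 p4)) (ne_of_gt (mul_pos p2 p3)),
    Real.log_mul (ne_of_gt p1) (ne_of_gt p4), Real.log_mul (ne_of_gt p2) (ne_of_gt p3),
    Real.log_div (ne_of_gt p1) (ne_of_gt p2), Real.log_div (ne_of_gt p3) (ne_of_gt p4)]
  ring

lemma rr_tendsto_atTop : Tendsto rr (𝓝[<] (1:ℝ)) atTop := by
  have h1 : Tendsto (fun t : ℝ => 1 - t) (𝓝[<] (1:ℝ)) (𝓝[>] 0) := by
    apply tendsto_nhdsWithin_of_tendsto_nhds_of_eventually_within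
    · have : Tendsto (fun t : ℝ => 1 - t) (𝓝 (1:ℝ)) (𝓝 0) := by
        have := (continuous_sub_left (1:ℝ)).tendsto 1
        simpa using this
      exact this.mono_left nhdsWithin_le_nhds
    · filter_upwards [self_mem_nhdsWithin] with t ht
      simp only [Set.mem_Iio] at ht
      simp [Set.mem_Ioi]; linarith
  have h2 : Tendsto (fun t : ℝ => Real.log (1 - t)) (𝓝[<] (1:ℝ)) atBot :=
    Real.tendsto_log_nhdsGT_zero.comp h1
  have h3 : Tendsto (fun t : ℝ => Real.log (1 + t)) (𝓝[<] (1:ℝ)) (𝓝 (Real.log 2)) := by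
    have hc : ContinuousAt (fun t : ℝ => Real.log (1 + t)) 1 := by
      apply (Real.continuousAt_log (by norm_num)).comp
      exact (continuous_const.add continuous_id).continuousAt
    have := hc.tendsto.mono_left (nhdsWithin_le_nhds (s := Set.Iio (1:ℝ)))
    norm_num at this
    exact this
  have h4 : Tendsto (fun t : ℝ => Real.log (1 + t) - Real.log (1 - t)) (𝓝[<] (1:ℝ)) atTop := by
    have := Filter.Tendsto.add_atTop h3 (tendsto_neg_atTop_iff.2 h2)
    simpa [sub_eq_add_neg] using this
  apply h4.congr'
  filter_upwards [Ioo_mem_nhdsLT (show (0:ℝ) < 1 by norm_num)] with t ht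
  unfold rr
  rw [Real.log_div (by nlinarith [ht.1, ht.2]) (by nlinarith [ht.2])]


/-! ### herm calculus -/

lemma herm_sub {n : ℕ} (z w v : En n) : herm (z - w) v = herm z v - herm w v := by
  unfold herm
  rw [← Finset.sum_sub_distrib]
  congr 1; ext j
  have : (z - w) j = z j - w j := rfl
  rw [this]; ring

lemma continuous_herm {n : ℕ} (v : En n) : Continuous fun z : En n => herm z v := by
  unfold herm
  apply continuous_finset_sum
  intro j _
  exact ((EuclideanSpace.proj (𝕜 := ℂ) j).continuous).mul continuous_const

lemma hasDerivAt_herm {n : ℕ} {F : ℂ → En n} {d : En n} {ζ : ℂ}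
    (hF : HasDerivAt F d ζ) (v : En n) :
    HasDerivAt (fun ζ => herm (F ζ) v) (herm d v) ζ := by
  unfold herm
  apply HasDerivAt.fun_sum
  intro j _
  have h1 : HasDerivAt (fun ζ => F ζ j) (d j) ζ := by
    have := (EuclideanSpace.proj j : En n →L[ℂ] ℂ).hasFDerivAt.comp_hasDerivAt ζ hF
    simpa [Function.comp_def] using this
  exact h1.mul_const _

lemma differentiableAt_herm {n : ℕ} {F : ℂ → En n} {ζ : ℂ}
    (hF : DifferentiableAt ℂ F ζ) (v : En n) :
    DifferentiableAt ℂ (fun ζ => herm (F ζ) v) ζ :=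
  (hasDerivAt_herm hF.hasDerivAt v).differentiableAt

lemma unitDisc_eq : unitDisc = ball (0 : ℂ) 1 := rfl

lemma mem_unitDisc_iff {ζ : ℂ} : ζ ∈ unitDisc ↔ ‖ζ‖ < 1 := by
  rw [unitDisc_eq, mem_ball_zero_iff]

/-! ### the Schwarz–Pick lower bound for `kob` -/

lemma kob_dichotomy {n : ℕ} {D : Set (En n)} {ξ nξ : En n}
    (hn : IsOuterUnitNormal D ξ nξ) {z w : En n} (hz : z ∈ D) (hw : w ∈ D) :
    kob D z w = 0 ∨
      poincareDist (cay (herm (z - ξ) nξ)) (cay (herm (w - ξ) nξ)) ≤ kob D z w := by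
  set S := { c | ∃ φ : ℂ → En n, DifferentiableOn ℂ φ unitDisc ∧ MapsTo φ unitDisc D ∧
    ∃ ζ₁ ∈ unitDisc, ∃ ζ₂ ∈ unitDisc, φ ζ₁ = z ∧ φ ζ₂ = w ∧ c = poincareDist ζ₁ ζ₂ } with hS
  have hkob : kob D z w = sInf S := rfl
  rcases Set.eq_empty_or_nonempty S with hSe | hSne
  · left; rw [hkob, hSe, Real.sInf_empty]
  · right
    rw [hkob]
    apply le_csInf hSne
    rintro c ⟨F, hFd, hFm, ζ₁, h1, ζ₂, h2, hF1, hF2, rfl⟩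
    set G : ℂ → ℂ := fun ζ => cay (herm (F ζ - ξ) nξ) with hG
    have hre : ∀ ζ ∈ unitDisc, (herm (F ζ - ξ) nξ).re < 0 := fun ζ hζ => hn.2 _ (hFm hζ)
    have hGd : DifferentiableOn ℂ G (ball 0 1) := by
      intro ζ hζ
      have hζ' : ζ ∈ unitDisc := hζ
      have hu : (herm (F ζ - ξ) nξ).re < 0 := hre ζ hζ'
      have hd1 : DifferentiableAt ℂ (fun ζ => herm (F ζ - ξ) nξ) ζ := by
        have hFd' : DifferentiableAt ℂ F ζ :=
          hFd.differentiableAt (isOpen_ball.mem_nhds hζ)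
        have := differentiableAt_herm hFd' nξ
        apply DifferentiableAt.congr_of_eventuallyEq (this.sub_const (herm ξ nξ))
        filter_upwards with x
        rw [herm_sub]
      have hd2 : DifferentiableAt ℂ cay (herm (F ζ - ξ) nξ) := by
        unfold cay
        refine DifferentiableAt.div ?_ ?_ (one_sub_ne_of_re_neg hu)
        · exact differentiableAt_fun_id.const_add 1
        · exact differentiableAt_fun_id.const_sub 1
      exact (hd2.comp ζ hd1).differentiableWithinAt
    have hGm : MapsTo G (ball 0 1) (ball 0 1) := by
      intro ζ hζ
      have hu : (herm (F ζ - ξ) nξ).re < 0 := hre ζ hζ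
      have := abs_cay_lt_one hu
      rw [mem_ball_zero_iff]
      exact this
    have key := schwarz_pick hGd hGm (h1 : ζ₁ ∈ ball (0:ℂ) 1) (h2 : ζ₂ ∈ ball (0:ℂ) 1)
    have e1 : G ζ₁ = cay (herm (z - ξ) nξ) := by rw [hG]; simp only; rw [hF1]
    have e2 : G ζ₂ = cay (herm (w - ξ) nξ) := by rw [hG]; simp only; rw [hF2]
    rw [e1, e2] at key
    exact key


/-! ### radial approach to 1 within a Stolz region -/

lemma tendsto_ofReal_one : Tendsto (fun t : ℝ => (t : ℂ)) (𝓝[<] (1:ℝ)) (𝓝 (1:ℂ)) := by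
  have : Tendsto (fun t : ℝ => (t : ℂ)) (𝓝 (1:ℝ)) (𝓝 (1:ℂ)) := by
    simpa using Complex.continuous_ofReal.tendsto 1
  exact this.mono_left nhdsWithin_le_nhds

lemma abs_ofReal_mem {t : ℝ} (h0 : 0 < t) (h1 : t < 1) : (t : ℂ) ∈ unitDisc := by
  rw [mem_unitDisc_iff, Complex.norm_real, Real.norm_eq_abs, _root_.abs_of_pos h0]
  exact h1

lemma one_sub_ofReal_abs {t : ℝ} (h1 : t < 1) : ‖(1 - (t:ℂ))‖ = 1 - t := by
  rw [show (1:ℂ) - (t:ℂ) = ((1-t : ℝ) : ℂ) by push_cast; ring, Complex.norm_real, Real.norm_eq_abs,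
    _root_.abs_of_pos (by linarith)]

lemma tendsto_ofReal_stolz :
    Tendsto (fun t : ℝ => (t : ℂ)) (𝓝[<] (1:ℝ)) (𝓝[stolzAt 1 2] 1) := by
  apply tendsto_nhdsWithin_of_tendsto_nhds_of_eventually_within _ tendsto_ofReal_one
  filter_upwards [Ioo_mem_nhdsLT (show (0:ℝ) < 1 by norm_num)] with t ht
  refine ⟨abs_ofReal_mem ht.1 ht.2, ?_⟩
  rw [one_sub_ofReal_abs ht.2, Complex.norm_real, Real.norm_eq_abs, _root_.abs_of_pos ht.1]
  linarith [ht.2]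

/-! ### asymptotics of the normal component along a geodesic -/

lemma geodesic_normal_asymp {n : ℕ} {ξ nξ : En n} {χ : ℂ → En n}
    (hχd : DifferentiableOn ℂ χ unitDisc) (hχe : HasEndpoint χ ξ) {c : ℝ}
    (hχc : NTLim (fun ζ => herm (deriv χ ζ) nξ) 1 (c : ℂ)) :
    Tendsto (fun t : ℝ => herm (χ (t : ℂ) - ξ) nξ / (1 - (t : ℂ))) (𝓝[<] (1:ℝ))
      (𝓝 (-c : ℂ)) := by
  have hder : Tendsto (fun t : ℝ => herm (deriv χ (t:ℂ)) nξ) (𝓝[<] (1:ℝ)) (𝓝 (c:ℂ)) :=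
    (hχc 2 one_lt_two).comp tendsto_ofReal_stolz
  set H : ℝ → ℂ := fun t => herm (χ (t:ℂ)) nξ - herm ξ nξ + c * (1 - (t:ℂ)) with hH
  have hH0 : Tendsto H (𝓝[<] (1:ℝ)) (𝓝 0) := by
    have hχξ : Tendsto (fun t : ℝ => herm (χ (t:ℂ)) nξ) (𝓝[<] (1:ℝ)) (𝓝 (herm ξ nξ)) :=
      ((continuous_herm nξ).tendsto ξ).comp hχe
    have h2 : Tendsto (fun t : ℝ => (c:ℂ) * (1 - (t:ℂ))) (𝓝[<] (1:ℝ)) (𝓝 0) := by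
      have := (tendsto_ofReal_one.const_sub (1:ℂ)).const_mul (c:ℂ)
      simpa using this
    have := (hχξ.sub_const (herm ξ nξ)).add h2
    simpa [hH] using this
  rw [Metric.tendsto_nhds]
  intro ε hε
  have hε'pos : 0 < ε/2 := by positivity
  have hev : ∀ᶠ t in 𝓝[<] (1:ℝ),
      t ∈ Ioo (0:ℝ) 1 ∧ ‖herm (deriv χ (t:ℂ)) nξ - (c:ℂ)‖ ≤ ε/2 := by
    have h1 : ∀ᶠ (t:ℝ) in 𝓝[<] (1:ℝ), ‖herm (deriv χ (t:ℂ)) nξ - (c:ℂ)‖ ≤ ε/2 := by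
      filter_upwards [hder (Metric.closedBall_mem_nhds _ hε'pos)] with t ht
      rw [Set.mem_preimage, Metric.mem_closedBall, dist_eq_norm] at ht; exact ht
    filter_upwards [Ioo_mem_nhdsLT (show (0:ℝ) < 1 by norm_num), h1] with t h2 h3
    exact ⟨h2, h3⟩
  obtain ⟨t₀, ht₀, hsub⟩ := mem_nhdsLT_iff_exists_Ioo_subset.1 hev
  set t₁ := max t₀ 0 with ht₁def
  have ht₁ : t₁ < 1 := max_lt ht₀ one_pos
  have hSsub : Ioo t₁ (1:ℝ) ⊆ Ioo t₀ 1 := fun x hx =>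
    ⟨lt_of_le_of_lt (le_max_left _ _) hx.1, hx.2⟩
  have hprop : ∀ t ∈ Ioo t₁ (1:ℝ),
      t ∈ Ioo (0:ℝ) 1 ∧ ‖herm (deriv χ (t:ℂ)) nξ - (c:ℂ)‖ ≤ ε/2 := fun t ht =>
    hsub (hSsub ht)
  have hHd : ∀ t ∈ Ioo t₁ (1:ℝ), HasDerivAt H (herm (deriv χ (t:ℂ)) nξ - c) t := by
    intro t ht
    have htI := (hprop t ht).1
    have htd : (t:ℂ) ∈ unitDisc := abs_ofReal_mem htI.1 htI.2
    have hχat : DifferentiableAt ℂ χ (t:ℂ) := hχd.differentiableAt (isOpen_ball.mem_nhds htd)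
    have h1 : HasDerivAt (fun ζ : ℂ => herm (χ ζ) nξ) (herm (deriv χ (t:ℂ)) nξ) (t:ℂ) :=
      hasDerivAt_herm hχat.hasDerivAt nξ
    have h2 : HasDerivAt (fun s : ℝ => herm (χ (s:ℂ)) nξ) (herm (deriv χ (t:ℂ)) nξ) t :=
      h1.comp_ofReal
    have h3 : HasDerivAt (fun s : ℝ => (c:ℂ) * (1 - (s:ℂ))) (-c) t := by
      have h4 : HasDerivAt (fun z : ℂ => (c:ℂ) * (1 - z)) (-c) (t:ℂ) := by
        have := ((hasDerivAt_id (t:ℂ)).const_sub (1:ℂ)).const_mul (c:ℂ)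
        simpa using this
      exact h4.comp_ofReal
    have h5 := (h2.sub_const (herm ξ nξ)).add h3
    have e : herm (deriv χ (t:ℂ)) nξ - (c:ℂ) = herm (deriv χ (t:ℂ)) nξ + -(c:ℂ) := by ring
    rw [hH, e]
    exact h5
  have hMVT : ∀ t ∈ Ioo t₁ (1:ℝ), ∀ u ∈ Ioo t₁ (1:ℝ), ‖H u - H t‖ ≤ ε/2 * ‖u - t‖ := by
    intro t ht u hu
    exact Convex.norm_image_sub_le_of_norm_hasDerivWithin_le
      (fun x hx => (hHd x hx).hasDerivWithinAt)
      (fun x hx => (hprop x hx).2) (convex_Ioo t₁ 1) ht hu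
  have hHbound : ∀ t ∈ Ioo t₁ (1:ℝ), ‖H t‖ ≤ ε/2 * (1 - t) := by
    intro t ht
    have l1 : Tendsto (fun u : ℝ => ‖H u - H t‖) (𝓝[<] (1:ℝ)) (𝓝 ‖(0:ℂ) - H t‖) :=
      (hH0.sub_const (H t)).norm
    have l2 : Tendsto (fun u : ℝ => ε/2 * ‖u - t‖) (𝓝[<] (1:ℝ)) (𝓝 (ε/2 * ‖(1:ℝ) - t‖)) := by
      have hid : Tendsto (fun u : ℝ => u) (𝓝[<] (1:ℝ)) (𝓝 (1:ℝ)) :=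
        (continuous_id.tendsto 1).mono_left nhdsWithin_le_nhds
      exact ((hid.sub_const t).norm).const_mul (ε/2)
    have hle : ∀ᶠ u in 𝓝[<] (1:ℝ), ‖H u - H t‖ ≤ ε/2 * ‖u - t‖ := by
      filter_upwards [Ioo_mem_nhdsLT ht₁] with u hu
      exact hMVT t ht u hu
    have := le_of_tendsto_of_tendsto l1 l2 hle
    rw [zero_sub, norm_neg] at this
    rwa [Real.norm_eq_abs, _root_.abs_of_pos (by linarith [ht.2])] at this
  filter_upwards [Ioo_mem_nhdsLT ht₁] with t ht
  have h1t : (0:ℝ) < 1 - t := by linarith [ht.2]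
  have hne : (1:ℂ) - (t:ℂ) ≠ 0 := by
    rw [show (1:ℂ) - (t:ℂ) = ((1-t : ℝ) : ℂ) by push_cast; ring]
    exact_mod_cast Complex.ofReal_ne_zero.2 (ne_of_gt h1t)
  rw [dist_eq_norm]
  have heq : herm (χ (t:ℂ) - ξ) nξ / (1 - (t:ℂ)) - (-c : ℂ) = H t / (1 - (t:ℂ)) := by
    rw [herm_sub, hH]
    field_simp
    ring
  rw [heq, norm_div]
  have hnd : ‖(1:ℂ) - (t:ℂ)‖ = 1 - t := by
    rw [show ‖(1:ℂ) - (t:ℂ)‖ = ‖(1 - (t:ℂ))‖ from rfl, one_sub_ofReal_abs ht.2]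
  rw [hnd]
  calc ‖H t‖ / (1 - t) ≤ ε/2 * (1 - t) / (1 - t) := by
        gcongr
        exact hHbound t ht
    _ = ε/2 := by field_simp
    _ < ε := by linarith


/-! ### asymptotics of the Poincaré distance of Cayley images -/

lemma one_sub_ofReal_ne {t : ℝ} (ht : t < 1) : (1:ℂ) - (t:ℂ) ≠ 0 := by
  rw [show (1:ℂ) - (t:ℂ) = ((1-t : ℝ) : ℂ) by push_cast; ring]
  exact Complex.ofReal_ne_zero.2 (by linarith)

lemma re_mul_ofReal (z : ℂ) (r : ℝ) : (z * (r:ℂ)).re = z.re * r := by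
  rw [Complex.mul_re]; simp

lemma pd_asymp {u : ℂ} (hu : u.re < 0) {v : ℝ → ℂ} {c : ℝ} (hc : 0 < c)
    (hv : Tendsto (fun t : ℝ => v t / (1 - (t:ℂ))) (𝓝[<] (1:ℝ)) (𝓝 (-c : ℂ))) :
    Tendsto (fun t : ℝ => poincareDist (cay u) (cay (v t)) - rr t) (𝓝[<] (1:ℝ))
      (𝓝 (Real.log ((‖u‖)^2 / (2*c*(-u.re))))) := by
  set W : ℝ → ℂ := fun t => v t / (1 - (t:ℂ)) with hWdef
  have hvW : ∀ t : ℝ, t < 1 → v t = W t * (1 - (t:ℂ)) := by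
    intro t ht
    have hne := one_sub_ofReal_ne ht
    rw [hWdef]
    field_simp
  have hWre : Tendsto (fun t => (W t).re) (𝓝[<] (1:ℝ)) (𝓝 (-c)) := by
    have := (Complex.continuous_re.tendsto _).comp hv
    simpa [Function.comp_def] using this
  have hone : Tendsto (fun t : ℝ => (1:ℂ) - (t:ℂ)) (𝓝[<] (1:ℝ)) (𝓝 0) := by
    have := tendsto_ofReal_one.const_sub (1:ℂ)
    simpa using this
  have hvlim : Tendsto v (𝓝[<] (1:ℝ)) (𝓝 0) := by
    have h2 := hv.mul hone
    rw [mul_zero] at h2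
    apply h2.congr'
    filter_upwards [Ioo_mem_nhdsLT (zero_lt_one' ℝ)] with t ht
    rw [← hvW t ht.2]
  have evre : ∀ᶠ t in 𝓝[<] (1:ℝ), ((v t).re < 0 ∧ (W t).re < 0) ∧ t ∈ Ioo (0:ℝ) 1 := by
    have h2 : ∀ᶠ t in 𝓝[<] (1:ℝ), (W t).re < -c/2 :=
      hWre.eventually_lt_const (by linarith)
    filter_upwards [h2, Ioo_mem_nhdsLT (zero_lt_one' ℝ)] with t h2t hIt
    have h1t : (0:ℝ) < 1 - t := by linarith [hIt.2]
    have hre : (v t).re = (W t).re * (1 - t) := by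
      rw [hvW t hIt.2, show (1:ℂ) - (t:ℂ) = ((1-t : ℝ) : ℂ) by push_cast; ring,
        re_mul_ofReal]
    have hWneg : (W t).re < 0 := by linarith
    refine ⟨⟨?_, hWneg⟩, hIt⟩
    rw [hre]
    exact mul_neg_of_neg_of_pos hWneg h1t
  have hmain : ∀ᶠ t in 𝓝[<] (1:ℝ),
      poincareDist (cay u) (cay (v t)) - rr t
        = Real.log ((‖u + conj' (v t)‖ + ‖u - v t‖)^2
            / (4 * u.re * (W t).re * (1 + t))) := by
    filter_upwards [evre] with t hct
    obtain ⟨⟨hvt, hWneg⟩, hIt⟩ := hct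
    have h1t : (0:ℝ) < 1 - t := by linarith [hIt.2]
    have h2t : (0:ℝ) < 1 + t := by linarith [hIt.1]
    set A := ‖u + conj' (v t)‖ with hA
    set B := ‖u - v t‖ with hB
    have hAB : B < A := abs_sub_lt_abs_add_conj hu hvt
    have hApos : 0 < A := norm_pos_iff.2 (add_conj_ne hu hvt)
    have hABpos : 0 < A - B := by linarith
    have hBnonneg : 0 ≤ B := norm_nonneg _
    have hprod : (A - B) * (A + B) = 4 * u.re * (v t).re := by
      have h1 : A^2 - B^2 = 4 * u.re * (v t).re := by
        rw [hA, hB, Complex.sq_norm, Complex.sq_norm]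
        exact normSq_halfplane_key u (v t)
      nlinarith [h1]
    have hre : (v t).re = (W t).re * (1 - t) := by
      rw [hvW t hIt.2, show (1:ℂ) - (t:ℂ) = ((1-t : ℝ) : ℂ) by push_cast; ring,
        re_mul_ofReal]
    have h4pos : (0:ℝ) < 4 * u.re * (v t).re := by nlinarith
    have s1 : (A+B)/(A-B) = (A+B)^2 / (4*u.re*(v t).re) := by
      rw [div_eq_div_iff (ne_of_gt hABpos) (ne_of_gt h4pos)]
      calc (A+B) * (4*u.re*(v t).re) = (A+B)*((A-B)*(A+B)) := by rw [hprod]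
        _ = (A+B)^2*(A-B) := by ring
    rw [poincareDist_cay hu hvt]
    unfold rr
    rw [← Real.log_div (by positivity) (by positivity)]
    congr 1
    obtain ⟨r, hr⟩ : ∃ r, (W t).re = r := ⟨_, rfl⟩
    rw [hr] at hre hWneg
    rw [hr, s1, hre]
    have hWne : r ≠ 0 := ne_of_lt hWneg
    have hune : u.re ≠ 0 := ne_of_lt hu
    field_simp
  have hNt : Tendsto (fun t => ‖u + conj' (v t)‖ + ‖u - v t‖)
      (𝓝[<] (1:ℝ)) (𝓝 (2 * ‖u‖)) := by
    have hconj : Tendsto (fun t => conj' (v t)) (𝓝[<] (1:ℝ)) (𝓝 0) := by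
      have := (continuous_star.tendsto (0:ℂ)).comp hvlim
      simpa [Function.comp_def] using this
    have t1 : Tendsto (fun t => u + conj' (v t)) (𝓝[<] (1:ℝ)) (𝓝 u) := by
      have := tendsto_const_nhds.add hconj (f := fun _ : ℝ => u)
      simpa using this
    have t3 : Tendsto (fun t => u - v t) (𝓝[<] (1:ℝ)) (𝓝 u) := by
      have := tendsto_const_nhds.sub hvlim (f := fun _ : ℝ => u)
      simpa using this
    have t2 := (continuous_norm.tendsto u).comp t1
    have t4 := (continuous_norm.tendsto u).comp t3
    have := t2.add t4
    rw [two_mul]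
    exact this
  have h1p : Tendsto (fun t : ℝ => 1 + t) (𝓝[<] (1:ℝ)) (𝓝 2) := by
    have hcont : Continuous (fun t : ℝ => 1 + t) := continuous_const.add continuous_id
    have := (hcont.tendsto 1).mono_left (nhdsWithin_le_nhds (s := Set.Iio (1:ℝ)))
    norm_num at this
    exact this
  have hdenlim : Tendsto (fun t => 4 * u.re * (W t).re * (1 + t)) (𝓝[<] (1:ℝ))
      (𝓝 (4 * u.re * (-c) * 2)) :=
    (hWre.const_mul (4 * u.re)).mul h1p
  have hdenne : 4 * u.re * (-c) * 2 ≠ 0 := by nlinarith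
  have hfrac : Tendsto
      (fun t => (‖u + conj' (v t)‖ + ‖u - v t‖)^2
        / (4 * u.re * (W t).re * (1 + t))) (𝓝[<] (1:ℝ))
      (𝓝 ((2 * ‖u‖)^2 / (4 * u.re * (-c) * 2))) :=
    (hNt.pow 2).div hdenlim hdenne
  have habsne : ‖u‖ ≠ 0 := by
    apply ne_of_gt; apply norm_pos_iff.2
    intro h0; rw [h0] at hu; simp at hu
  have hvalpos : 0 < (2 * ‖u‖)^2 / (4 * u.re * (-c) * 2) := by
    apply div_pos
    · positivity
    · nlinarith
  have hloglim := ((Real.continuousAt_log (ne_of_gt hvalpos)).tendsto).comp hfrac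
  have hvaleq : Real.log ((2 * ‖u‖)^2 / (4 * u.re * (-c) * 2))
      = Real.log ((‖u‖)^2 / (2*c*(-u.re))) := by
    congr 1
    have hune : u.re ≠ 0 := ne_of_lt hu
    field_simp
    ring
  rw [← hvaleq]
  exact hloglim.congr' (Filter.EventuallyEq.symm hmain)

lemma rr_plus_log_tendsto {u : ℝ → ℂ} {c d : ℝ} (hc : 0 < c) (hd : 0 < d)
    (hu : Tendsto (fun σ : ℝ => u σ / (1 - (σ:ℂ))) (𝓝[<] (1:ℝ)) (𝓝 (-c : ℂ))) :
    Tendsto (fun σ : ℝ => rr σ + Real.log ((‖u σ‖)^2 / (2*d*(-(u σ).re))))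
      (𝓝[<] (1:ℝ)) (𝓝 (Real.log (c/d))) := by
  set W : ℝ → ℂ := fun σ => u σ / (1 - (σ:ℂ)) with hWdef
  have hvW : ∀ σ : ℝ, σ < 1 → u σ = W σ * (1 - (σ:ℂ)) := by
    intro σ hσ
    have hne := one_sub_ofReal_ne hσ
    rw [hWdef]
    field_simp
  have hWre : Tendsto (fun σ => (W σ).re) (𝓝[<] (1:ℝ)) (𝓝 (-c)) := by
    have := (Complex.continuous_re.tendsto _).comp hu
    simpa [Function.comp_def] using this
  have hWabs : Tendsto (fun σ => ‖W σ‖) (𝓝[<] (1:ℝ)) (𝓝 c) := by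
    have := (continuous_norm.tendsto _).comp hu
    have he : ‖(-c : ℂ)‖ = c := by
      rw [norm_neg, Complex.norm_real, Real.norm_eq_abs, _root_.abs_of_pos hc]
    rwa [he] at this
  have hev : ∀ᶠ σ in 𝓝[<] (1:ℝ), (W σ).re < -c/2 ∧ σ ∈ Ioo (0:ℝ) 1 := by
    filter_upwards [hWre.eventually_lt_const (show -c < -c/2 by linarith),
      Ioo_mem_nhdsLT (zero_lt_one' ℝ)] with σ h1 h2
    exact ⟨h1, h2⟩
  have hmain : ∀ᶠ σ in 𝓝[<] (1:ℝ),
      rr σ + Real.log ((‖u σ‖)^2 / (2*d*(-(u σ).re)))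
        = Real.log ((1+σ) * (‖W σ‖)^2 / (2*d*(-(W σ).re))) := by
    filter_upwards [hev] with σ hσ
    obtain ⟨hWneg', hI⟩ := hσ
    have hWneg : (W σ).re < 0 := by linarith
    have h1σ : (0:ℝ) < 1 - σ := by linarith [hI.2]
    have h2σ : (0:ℝ) < 1 + σ := by linarith [hI.1]
    have husσ : u σ = W σ * ((1-σ : ℝ) : ℂ) := by
      rw [hvW σ hI.2]
      congr 1
      push_cast; ring
    have habs : ‖u σ‖ = ‖W σ‖ * (1-σ) := by
      rw [husσ, norm_mul, Complex.norm_real, Real.norm_eq_abs, _root_.abs_of_pos h1σ]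
    have hre : (u σ).re = (W σ).re * (1-σ) := by rw [husσ, re_mul_ofReal]
    have hWabspos : 0 < ‖W σ‖ := by
      apply norm_pos_iff.2
      intro h0; rw [h0] at hWneg; simp at hWneg
    obtain ⟨r, hr⟩ : ∃ r, (W σ).re = r := ⟨_, rfl⟩
    obtain ⟨m, hm⟩ : ∃ m, ‖W σ‖ = m := ⟨_, rfl⟩
    rw [hr] at hre hWneg
    rw [hm] at habs hWabspos
    unfold rr
    rw [← Real.log_mul (by positivity) ?_]
    · congr 1
      rw [habs, hre, hr, hm]
      have hWne : r ≠ 0 := ne_of_lt hWneg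
      field_simp
    · have : 0 < (‖u σ‖)^2 / (2*d*(-(u σ).re)) := by
        apply div_pos
        · rw [habs]; positivity
        · rw [hre]
          nlinarith [mul_pos (neg_pos.2 hWneg) h1σ, hd]
      exact ne_of_gt this
  have hlim : Tendsto (fun σ => (1+σ) * (‖W σ‖)^2 / (2*d*(-(W σ).re)))
      (𝓝[<] (1:ℝ)) (𝓝 (2 * c^2 / (2*d*c))) := by
    have h1p : Tendsto (fun σ : ℝ => 1 + σ) (𝓝[<] (1:ℝ)) (𝓝 2) := by
      have hcont : Continuous (fun t : ℝ => 1 + t) := continuous_const.add continuous_id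
      have := (hcont.tendsto 1).mono_left (nhdsWithin_le_nhds (s := Set.Iio (1:ℝ)))
      norm_num at this
      exact this
    have hnum : Tendsto (fun σ => (1+σ) * (‖W σ‖)^2) (𝓝[<] (1:ℝ))
        (𝓝 (2 * c^2)) := h1p.mul (hWabs.pow 2)
    have hden : Tendsto (fun σ => 2*d*(-(W σ).re)) (𝓝[<] (1:ℝ)) (𝓝 (2*d*c)) := by
      have := hWre.neg.const_mul (2*d)
      simpa using this
    exact hnum.div hden (by positivity)
  have hvaleq : Real.log (2 * c^2 / (2*d*c)) = Real.log (c/d) := by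
    congr 1
    field_simp
  have := ((Real.continuousAt_log (show 2*c^2/(2*d*c) ≠ 0 by positivity)).tendsto).comp hlim
  rw [hvaleq] at this
  exact this.congr' (Filter.EventuallyEq.symm hmain)

end StmtAux

/-- if `φ, ψ` are complex geodesics with endpoint a locally finite type point
`ξ ∈ ∂D`, then `h_{ξ,φ(0)}(ψ(0)) = log(ψ'_N(1)/φ'_N(1))`; in particular `φ(0) = ψ(0)`
implies `φ'_N(1) = ψ'_N(1)`. -/
theorem stmt0 {n : ℕ} (D : Set (En n)) (hD : IsCProperConvex D)
    (ξ : En n) (hξ : IsLocallyFiniteType D ξ)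
    (nξ : En n) (hn : IsOuterUnitNormal D ξ nξ)
    (φ ψ : ℂ → En n) (hφ : IsComplexGeodesic D φ) (hψ : IsComplexGeodesic D ψ)
    (hφe : HasEndpoint φ ξ) (hψe : HasEndpoint ψ ξ)
    (a b : ℝ) (ha : 0 < a) (hb : 0 < b)
    (hφa : NTLim (fun ζ => herm (deriv φ ζ) nξ) 1 (a : ℂ))
    (hψb : NTLim (fun ζ => herm (deriv ψ ζ) nξ) 1 (b : ℂ))
    (h : En n → ℝ) (hh : IsHorofunction D ξ (φ 0) h) :
    h (ψ 0) = Real.log (b / a) ∧ (φ 0 = ψ 0 → a = b) := by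
  classical
  obtain ⟨hφd, hφm, hφiso⟩ := hφ
  obtain ⟨hψd, hψm, hψiso⟩ := hψ
  have h0mem : (0:ℂ) ∈ unitDisc := by
    rw [StmtAux.mem_unitDisc_iff]; simp
  have hψ0D : ψ 0 ∈ D := hψm h0mem
  have hφ0D : φ 0 ∈ D := hφm h0mem
  have evmem : ∀ᶠ t in 𝓝[<] (1:ℝ), t ∈ Ioo (0:ℝ) 1 :=
    Ioo_mem_nhdsLT (zero_lt_one' ℝ)
  have pathψ : Tendsto (fun s : ℝ => ψ (s:ℂ)) (𝓝[<] (1:ℝ)) (𝓝[D] ξ) := by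
    apply tendsto_nhdsWithin_of_tendsto_nhds_of_eventually_within _ hψe
    filter_upwards [evmem] with s hs
    exact hψm (StmtAux.abs_ofReal_mem hs.1 hs.2)
  have pathφ : Tendsto (fun t : ℝ => φ (t:ℂ)) (𝓝[<] (1:ℝ)) (𝓝[D] ξ) := by
    apply tendsto_nhdsWithin_of_tendsto_nhds_of_eventually_within _ hφe
    filter_upwards [evmem] with s hs
    exact hφm (StmtAux.abs_ofReal_mem hs.1 hs.2)
  have asφ : Tendsto (fun t : ℝ => herm (φ (t:ℂ) - ξ) nξ / (1 - (t:ℂ))) (𝓝[<] (1:ℝ))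
      (𝓝 (-a : ℂ)) := StmtAux.geodesic_normal_asymp hφd hφe hφa
  have asψ : Tendsto (fun t : ℝ => herm (ψ (t:ℂ) - ξ) nξ / (1 - (t:ℂ))) (𝓝[<] (1:ℝ))
      (𝓝 (-b : ℂ)) := StmtAux.geodesic_normal_asymp hψd hψe hψb
  set A := h (ψ 0) with hAdef
  have L1 : Tendsto (fun s : ℝ => StmtAux.rr s - kob D (ψ (s:ℂ)) (φ 0)) (𝓝[<] (1:ℝ))
      (𝓝 A) := by
    have T0 := (hh _ hψ0D).comp pathψ
    apply T0.congr'
    filter_upwards [evmem] with s hs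
    simp only [Function.comp_apply]
    rw [hψiso 0 h0mem (s:ℂ) (StmtAux.abs_ofReal_mem hs.1 hs.2),
      StmtAux.poincareDist_zero_right hs.1.le hs.2]
  have hzφ : ∀ z ∈ D, Tendsto (fun t : ℝ => kob D z (φ (t:ℂ)) - StmtAux.rr t)
      (𝓝[<] (1:ℝ)) (𝓝 (h z)) := by
    intro z hz
    have T0 := (hh _ hz).comp pathφ
    apply T0.congr'
    filter_upwards [evmem] with t ht
    simp only [Function.comp_apply]
    rw [hφiso (t:ℂ) (StmtAux.abs_ofReal_mem ht.1 ht.2) 0 h0mem,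
      StmtAux.poincareDist_zero_left ht.1.le ht.2]
  have hψσ : ∀ σ : ℝ, σ ∈ Ioo (0:ℝ) 1 → h (ψ (σ:ℂ)) = A - StmtAux.rr σ := by
    intro σ hσ
    have hσm : (σ:ℂ) ∈ unitDisc := StmtAux.abs_ofReal_mem hσ.1 hσ.2
    have hzD : ψ (σ:ℂ) ∈ D := hψm hσm
    have T1 : Tendsto (fun s : ℝ => (StmtAux.rr s - kob D (ψ (s:ℂ)) (φ 0)) - StmtAux.rr σ)
        (𝓝[<] (1:ℝ)) (𝓝 (A - StmtAux.rr σ)) := L1.sub_const _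
    have T2 := (hh _ hzD).comp pathψ
    have T2' : Tendsto (fun s : ℝ => (StmtAux.rr s - kob D (ψ (s:ℂ)) (φ 0)) - StmtAux.rr σ)
        (𝓝[<] (1:ℝ)) (𝓝 (h (ψ (σ:ℂ)))) := by
      apply T2.congr'
      filter_upwards [Ioo_mem_nhdsLT hσ.2] with s hs
      simp only [Function.comp_apply]
      rw [hψiso (σ:ℂ) hσm (s:ℂ) (StmtAux.abs_ofReal_mem (lt_trans hσ.1 hs.1) hs.2),
        StmtAux.poincareDist_radial hσ.1.le hs.1.le hs.2]
      ring
    exact tendsto_nhds_unique T2' T1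
  have hφτ : ∀ τ : ℝ, 0 ≤ τ → τ < 1 → h (φ (τ:ℂ)) = - StmtAux.rr τ := by
    intro τ h0τ hτ1
    have hτm : (τ:ℂ) ∈ unitDisc := by
      rw [StmtAux.mem_unitDisc_iff, Complex.norm_real, Real.norm_eq_abs, _root_.abs_of_nonneg h0τ]
      exact hτ1
    have hzD : φ (τ:ℂ) ∈ D := hφm hτm
    have T2 := (hh _ hzD).comp pathφ
    have T2' : Tendsto (fun _ : ℝ => - StmtAux.rr τ) (𝓝[<] (1:ℝ)) (𝓝 (h (φ (τ:ℂ)))) := by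
      apply T2.congr'
      filter_upwards [Ioo_mem_nhdsLT hτ1] with t ht
      simp only [Function.comp_apply]
      have htm : (t:ℂ) ∈ unitDisc := by
        rw [StmtAux.mem_unitDisc_iff, Complex.norm_real, Real.norm_eq_abs,
          _root_.abs_of_nonneg (le_trans h0τ ht.1.le)]
        exact ht.2
      rw [hφiso (τ:ℂ) hτm (t:ℂ) htm,
        StmtAux.poincareDist_radial h0τ ht.1.le ht.2,
        hφiso (t:ℂ) htm 0 h0mem,
        StmtAux.poincareDist_zero_left (le_trans h0τ ht.1.le) ht.2]
      ring
    exact tendsto_nhds_unique T2' tendsto_const_nhds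
  have keyLower : ∀ σ : ℝ, σ ∈ Ioo (0:ℝ) 1 →
      StmtAux.rr σ + Real.log ((‖(herm (ψ (σ:ℂ) - ξ) nξ)‖)^2
        / (2*a*(-(herm (ψ (σ:ℂ) - ξ) nξ).re))) ≤ A := by
    intro σ hσ
    have hσm : (σ:ℂ) ∈ unitDisc := StmtAux.abs_ofReal_mem hσ.1 hσ.2
    have hzD : ψ (σ:ℂ) ∈ D := hψm hσm
    have hure : (herm (ψ (σ:ℂ) - ξ) nξ).re < 0 := hn.2 _ hzD
    have T1 := hzφ _ hzD
    have Tatop : Tendsto (fun t : ℝ => kob D (ψ (σ:ℂ)) (φ (t:ℂ))) (𝓝[<] (1:ℝ)) atTop := by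
      have h5 := Filter.Tendsto.add_atTop T1 StmtAux.rr_tendsto_atTop
      apply h5.congr
      intro t; ring
    have evge : ∀ᶠ (t:ℝ) in 𝓝[<] (1:ℝ),
        poincareDist (StmtAux.cay (herm (ψ (σ:ℂ) - ξ) nξ))
            (StmtAux.cay (herm (φ (t:ℂ) - ξ) nξ))
          ≤ kob D (ψ (σ:ℂ)) (φ (t:ℂ)) := by
      filter_upwards [Tatop.eventually_ge_atTop 1, evmem] with t h1 h2
      rcases StmtAux.kob_dichotomy hn hzD (hφm (StmtAux.abs_ofReal_mem h2.1 h2.2)) with h3 | h3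
      · rw [h3] at h1; linarith
      · exact h3
    have E := StmtAux.pd_asymp hure ha asφ
    have hle := le_of_tendsto_of_tendsto E T1
      (by filter_upwards [evge] with t h4 using by linarith)
    rw [hψσ σ hσ] at hle
    linarith
  have lower : Real.log (b/a) ≤ A := by
    have T := StmtAux.rr_plus_log_tendsto hb ha asψ
    exact le_of_tendsto T (by filter_upwards [evmem] with σ hσ using keyLower σ hσ)
  have keyUpper : ∀ τ : ℝ, τ ∈ Ioo (0:ℝ) 1 →
      A ≤ -(StmtAux.rr τ + Real.log ((‖(herm (φ (τ:ℂ) - ξ) nξ)‖)^2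
        / (2*b*(-(herm (φ (τ:ℂ) - ξ) nξ).re)))) := by
    intro τ hτ
    have hτm : (τ:ℂ) ∈ unitDisc := StmtAux.abs_ofReal_mem hτ.1 hτ.2
    have hzD : φ (τ:ℂ) ∈ D := hφm hτm
    have hure : (herm (φ (τ:ℂ) - ξ) nξ).re < 0 := hn.2 _ hzD
    have Tψ := (hh _ hzD).comp pathψ
    rw [hφτ τ hτ.1.le hτ.2] at Tψ
    have Tcomb : Tendsto (fun s : ℝ => kob D (φ (τ:ℂ)) (ψ (s:ℂ)) - StmtAux.rr s)
        (𝓝[<] (1:ℝ)) (𝓝 (- StmtAux.rr τ - A)) := by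
      have h5 := Tψ.sub L1
      apply h5.congr
      intro s
      simp only [Function.comp_apply]
      ring
    have Tatop : Tendsto (fun s : ℝ => kob D (φ (τ:ℂ)) (ψ (s:ℂ))) (𝓝[<] (1:ℝ)) atTop := by
      have h5 := Filter.Tendsto.add_atTop Tcomb StmtAux.rr_tendsto_atTop
      apply h5.congr
      intro s; ring
    have evge : ∀ᶠ (s:ℝ) in 𝓝[<] (1:ℝ),
        poincareDist (StmtAux.cay (herm (φ (τ:ℂ) - ξ) nξ))
            (StmtAux.cay (herm (ψ (s:ℂ) - ξ) nξ))
          ≤ kob D (φ (τ:ℂ)) (ψ (s:ℂ)) := by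
      filter_upwards [Tatop.eventually_ge_atTop 1, evmem] with s h1 h2
      rcases StmtAux.kob_dichotomy hn hzD (hψm (StmtAux.abs_ofReal_mem h2.1 h2.2)) with h3 | h3
      · rw [h3] at h1; linarith
      · exact h3
    have E := StmtAux.pd_asymp hure hb asψ
    have hle := le_of_tendsto_of_tendsto E Tcomb
      (by filter_upwards [evge] with s h4 using by linarith)
    linarith
  have upper : A ≤ Real.log (b/a) := by
    have T := (StmtAux.rr_plus_log_tendsto ha hb asφ).neg
    have hA2 : A ≤ -Real.log (a/b) :=
      ge_of_tendsto T (by filter_upwards [evmem] with τ hτ using keyUpper τ hτ)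
    rwa [← Real.log_inv, inv_div] at hA2
  have hmain : h (ψ 0) = Real.log (b/a) := le_antisymm upper lower
  refine ⟨hmain, ?_⟩
  intro heq
  have h00 : h (φ 0) = 0 := by
    have h5 := hφτ 0 le_rfl one_pos
    rw [show ((0:ℝ):ℂ) = (0:ℂ) from by norm_num] at h5
    rw [h5]
    simp [StmtAux.rr]
  rw [heq, hmain] at h00
  have hba : b/a = 1 := by
    rcases Real.log_eq_zero.1 h00 with h1 | h1 | h1
    · exfalso
      have h2 : (0:ℝ) < b/a := div_pos hb ha
      rw [h1] at h2; norm_num at h2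
    · exact h1
    · exfalso
      have h2 : (0:ℝ) < b/a := div_pos hb ha
      rw [h1] at h2; norm_num at h2
  field_simp at hba
  exact hba.symm
end
end

section
/- Let D ⊆ ℂⁿ be a ℂ-proper convex domain, let ξ ∈ ∂D be a point of locally finite type, and let φ : 𝔻 → D be a complex geodesic with endpoint ξ. Then for every ζ ∈ 𝔻, Ω_ξ(φ(ζ)) = −(1−|ζ|²)/(|1−ζ|² · φ'_N(1)). -/
open Filter Topology Metric Set

noncomputable section

set_option maxHeartbeats 1000000

/-- The complex absolute value, as an `AbsoluteValue`. -/
def Complex.abs : AbsoluteValue ℂ ℝ where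
  toFun z := ‖z‖
  map_mul' := norm_mul
  nonneg' := norm_nonneg
  eq_zero' _ := norm_eq_zero
  add_le' := norm_add_le

@[simp]
lemma Complex.norm_eq_abs (z : ℂ) : ‖z‖ = Complex.abs z := rfl

@[simp]
lemma Complex.abs_conj (z : ℂ) : Complex.abs ((starRingEnd ℂ) z) = Complex.abs z :=
  Complex.norm_conj z

@[simp]
lemma Complex.abs_ofReal (r : ℝ) : Complex.abs (r : ℂ) = |r| := Complex.norm_real r

lemma Complex.sq_abs (z : ℂ) : Complex.abs z ^ 2 = Complex.normSq z := Complex.sq_norm z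

lemma Complex.continuous_abs : Continuous Complex.abs := continuous_norm

lemma Complex.re_le_abs (z : ℂ) : z.re ≤ Complex.abs z := Complex.re_le_norm z

lemma Complex.abs_le_abs_of_mapsTo_ball_self {f : ℂ → ℂ} {R : ℝ} {z : ℂ}
    (hd : DifferentiableOn ℂ f (Metric.ball 0 R))
    (h_maps : MapsTo f (Metric.ball 0 R) (Metric.ball 0 R)) (h₀ : f 0 = 0)
    (hz : Complex.abs z < R) : Complex.abs (f z) ≤ Complex.abs z :=
  Complex.norm_le_norm_of_mapsTo_ball hd (h_maps.mono_right Metric.ball_subset_closedBall) h₀ hz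

namespace Stmt2Aux

open Complex

lemma mem_unitDisc {z : ℂ} : z ∈ unitDisc ↔ Complex.abs z < 1 := by
  simp [unitDisc, Metric.mem_ball, Complex.dist_eq]

lemma normSq_lt_one_iff {z : ℂ} : normSq z < 1 ↔ Complex.abs z < 1 := by
  rw [← Complex.sq_abs]
  constructor
  · intro h
    nlinarith [Complex.abs.nonneg z]
  · intro h
    nlinarith [Complex.abs.nonneg z]

lemma one_sub_ne_zero {w : ℂ} (h : Complex.abs w < 1) : (1 : ℂ) - w ≠ 0 := by
  intro hw
  have : w = 1 := by linear_combination -hw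
  rw [this] at h
  simp at h

lemma normSq_identity (p q : ℂ) :
    normSq (1 - (starRingEnd ℂ) p * q) = normSq (p - q) + (1 - normSq p) * (1 - normSq q) := by
  have h : ((normSq (1 - (starRingEnd ℂ) p * q) : ℝ) : ℂ)
      = ((normSq (p - q) + (1 - normSq p) * (1 - normSq q) : ℝ) : ℂ) := by
    push_cast
    rw [← Complex.mul_conj, ← Complex.mul_conj, ← Complex.mul_conj, ← Complex.mul_conj]
    simp only [map_sub, map_mul, map_one, Complex.conj_conj]
    ring
  exact_mod_cast h

/-- The Möbius involution of the disc. -/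
def moeb (a ζ : ℂ) : ℂ := (a - ζ) / (1 - (starRingEnd ℂ) a * ζ)

lemma moeb_denom_ne_zero {a ζ : ℂ} (h : Complex.abs a * Complex.abs ζ < 1) :
    (1 : ℂ) - (starRingEnd ℂ) a * ζ ≠ 0 := by
  apply one_sub_ne_zero
  rwa [map_mul, Complex.abs_conj]

lemma normSq_one_sub_moeb {a ζ : ℂ} (h : (1 : ℂ) - (starRingEnd ℂ) a * ζ ≠ 0) :
    1 - normSq (moeb a ζ)
      = (1 - normSq a) * (1 - normSq ζ) / normSq (1 - (starRingEnd ℂ) a * ζ) := by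
  have hns : normSq (1 - (starRingEnd ℂ) a * ζ) ≠ 0 := by
    simpa [Complex.normSq_eq_zero] using h
  rw [moeb, Complex.normSq_div]
  have hns' : normSq (1 - ζ * (starRingEnd ℂ) a) ≠ 0 := by rwa [mul_comm ζ]
  field_simp
  linear_combination normSq_identity a ζ + congrArg (fun x => normSq (1 - x)) (mul_comm ζ ((starRingEnd ℂ) a))

lemma abs_moeb_lt_one {a ζ : ℂ} (ha : Complex.abs a < 1) (hζ : Complex.abs ζ < 1) :
    Complex.abs (moeb a ζ) < 1 := by
  have h := moeb_denom_ne_zero (by nlinarith [Complex.abs.nonneg a, Complex.abs.nonneg ζ] :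
    Complex.abs a * Complex.abs ζ < 1)
  rw [← normSq_lt_one_iff]
  have h1 : 0 < 1 - normSq a := by rw [sub_pos]; exact normSq_lt_one_iff.2 ha
  have h2 : 0 < 1 - normSq ζ := by rw [sub_pos]; exact normSq_lt_one_iff.2 hζ
  have h3 : 0 < normSq (1 - (starRingEnd ℂ) a * ζ) := by
    rcases (Complex.normSq_pos).2 h with h'
    exact h'
  nlinarith [normSq_one_sub_moeb h, div_pos (mul_pos h1 h2) h3]

lemma abs_moeb_le_one {a ζ : ℂ} (ha : Complex.abs a < 1) (hζ : Complex.abs ζ ≤ 1)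
    (h : (1 : ℂ) - (starRingEnd ℂ) a * ζ ≠ 0) :
    Complex.abs (moeb a ζ) ≤ 1 := by
  rcases lt_or_eq_of_le hζ with h' | h'
  · exact (abs_moeb_lt_one ha h').le
  · have h1 : 0 < 1 - normSq a := by rw [sub_pos]; exact normSq_lt_one_iff.2 ha
    have h2 : normSq ζ = 1 := by rw [← Complex.sq_abs, h']; norm_num
    have := normSq_one_sub_moeb h
    rw [h2] at this
    simp at this
    have : normSq (moeb a ζ) ≤ 1 := by rw [← sub_nonneg, this]
    rw [← Complex.sq_abs] at this
    nlinarith [Complex.abs.nonneg (moeb a ζ)]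

lemma one_sub_conj_mul_moeb {a ζ : ℂ} (h : (1 : ℂ) - (starRingEnd ℂ) a * ζ ≠ 0) :
    (1 : ℂ) - (starRingEnd ℂ) a * moeb a ζ
      = (1 - (starRingEnd ℂ) a * a) / (1 - (starRingEnd ℂ) a * ζ) := by
  rw [moeb]
  field_simp
  ring

lemma moeb_moeb {a ζ : ℂ} (ha : Complex.abs a < 1) (hζ : Complex.abs ζ < 1) :
    moeb a (moeb a ζ) = ζ := by
  have h : (1 : ℂ) - (starRingEnd ℂ) a * ζ ≠ 0 :=
    moeb_denom_ne_zero (by nlinarith [Complex.abs.nonneg a, Complex.abs.nonneg ζ])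
  have h2 : (1 : ℂ) - (starRingEnd ℂ) a * a ≠ 0 := by
    apply one_sub_ne_zero
    rw [map_mul, Complex.abs_conj]
    nlinarith [Complex.abs.nonneg a]
  have h3 : (1 : ℂ) - (starRingEnd ℂ) a * moeb a ζ ≠ 0 := by
    rw [one_sub_conj_mul_moeb h]
    exact div_ne_zero h2 h
  rw [moeb, one_sub_conj_mul_moeb h, moeb]
  have h' : (1 : ℂ) - ζ * (starRingEnd ℂ) a ≠ 0 := by rwa [mul_comm ζ]
  have h2' : (1 : ℂ) - a * (starRingEnd ℂ) a ≠ 0 := by rwa [mul_comm a]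
  field_simp
  ring

lemma moeb_self (a : ℂ) : moeb a a = 0 := by simp [moeb]

lemma moeb_zero (a : ℂ) : moeb a 0 = a := by simp [moeb]

lemma differentiableAt_moeb {a ζ : ℂ} (h : (1 : ℂ) - (starRingEnd ℂ) a * ζ ≠ 0) :
    DifferentiableAt ℂ (moeb a) ζ := by
  apply DifferentiableAt.div
  · exact (differentiableAt_const a).sub differentiableAt_id
  · exact (differentiableAt_const 1).sub ((differentiableAt_const _).mul differentiableAt_id)
  · exact h

lemma differentiableOn_moeb {a : ℂ} (ha : Complex.abs a < 1) :
    DifferentiableOn ℂ (moeb a) (ball 0 1) := by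
  intro ζ hζ
  rw [mem_ball_zero_iff, Complex.norm_eq_abs] at hζ
  exact (differentiableAt_moeb (moeb_denom_ne_zero
    (by nlinarith [Complex.abs.nonneg a, Complex.abs.nonneg ζ]))).differentiableWithinAt

/-- Schwarz–Pick-type lemma: a self-map of the disc vanishing at `η₂`. -/
lemma schwarz_pick_zero {g : ℂ → ℂ} (hd : DifferentiableOn ℂ g (ball 0 1))
    (hm : MapsTo g (ball 0 1) (ball 0 1)) {η₁ η₂ : ℂ}
    (h1 : Complex.abs η₁ < 1) (h2 : Complex.abs η₂ < 1) (hg : g η₂ = 0) :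
    Complex.abs (g η₁) ≤ Complex.abs (moeb η₂ η₁) := by
  have hmball : MapsTo (moeb η₂) (ball 0 1) (ball 0 1) := by
    intro ζ hζ
    rw [mem_ball_zero_iff, Complex.norm_eq_abs] at hζ ⊢
    exact abs_moeb_lt_one h2 hζ
  have hh : DifferentiableOn ℂ (fun ζ => g (moeb η₂ ζ)) (ball 0 1) :=
    hd.comp (differentiableOn_moeb h2) hmball
  have hmaps : MapsTo (fun ζ => g (moeb η₂ ζ)) (ball 0 1) (ball 0 1) :=
    fun ζ hζ => hm (hmball hζ)
  have h0 : (fun ζ => g (moeb η₂ ζ)) 0 = 0 := by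
    simp only [moeb_zero]; exact hg
  have hz : Complex.abs (moeb η₂ η₁) < 1 := abs_moeb_lt_one h2 h1
  have := Complex.abs_le_abs_of_mapsTo_ball_self hh hmaps h0 hz
  rwa [moeb_moeb h2 h1] at this


lemma normSq_T_denom (c : ℝ) (w α : ℂ) :
    normSq (w - (((2*c : ℝ) : ℂ) - (starRingEnd ℂ) α)) = normSq (w - α) + 4*(c - w.re)*(c - α.re) := by
  simp only [Complex.normSq_apply, Complex.sub_re, Complex.sub_im, Complex.mul_re,
    Complex.mul_im, Complex.ofReal_re, Complex.ofReal_im, Complex.conj_re, Complex.conj_im,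
    ]
  ring

lemma T_denom_ne_zero {c : ℝ} {w α : ℂ} (hw : w.re < c) (hα : α.re < c) :
    w - (((2*c : ℝ) : ℂ) - (starRingEnd ℂ) α) ≠ 0 := by
  intro h
  have : (w - (((2*c : ℝ) : ℂ) - (starRingEnd ℂ) α)).re = 0 := by rw [h]; simp
  simp only [Complex.sub_re, Complex.mul_re, Complex.ofReal_re, Complex.ofReal_im,
    Complex.conj_re] at this
  nlinarith

lemma abs_T_lt_one {c : ℝ} {w α : ℂ} (hw : w.re < c) (hα : α.re < c) :
    Complex.abs ((w - α) / (w - (((2*c : ℝ) : ℂ) - (starRingEnd ℂ) α))) < 1 := by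
  rw [map_div₀, div_lt_one (by
    rw [Complex.abs.pos_iff]; exact T_denom_ne_zero hw hα)]
  have h1 : normSq (w - α) < normSq (w - (((2*c : ℝ) : ℂ) - (starRingEnd ℂ) α)) := by
    rw [normSq_T_denom]
    nlinarith
  rw [← Complex.sq_abs, ← Complex.sq_abs] at h1
  have := Complex.abs.nonneg (w - α)
  have := Complex.abs.nonneg (w - (((2*c : ℝ) : ℂ) - (starRingEnd ℂ) α))
  nlinarith

/-- Half-plane Schwarz–Pick estimate. -/
lemma halfplane_estimate {g : ℂ → ℂ} (hd : DifferentiableOn ℂ g (ball 0 1))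
    {c : ℝ} (hm : ∀ ζ ∈ ball (0:ℂ) 1, (g ζ).re < c) {η₁ η₂ : ℂ}
    (h1 : Complex.abs η₁ < 1) (h2 : Complex.abs η₂ < 1) :
    Complex.abs (g η₁ - g η₂) * (1 - Complex.abs (moeb η₂ η₁))
      ≤ 2 * Complex.abs (moeb η₂ η₁) * (c - (g η₂).re) := by
  set α := g η₂ with hα
  have hη₂b : η₂ ∈ ball (0:ℂ) 1 := by
    rw [mem_ball_zero_iff, Complex.norm_eq_abs]; exact h2
  have hη₁b : η₁ ∈ ball (0:ℂ) 1 := by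
    rw [mem_ball_zero_iff, Complex.norm_eq_abs]; exact h1
  have hαre : α.re < c := hm η₂ hη₂b
  set T : ℂ → ℂ := fun w => (w - α) / (w - (((2*c : ℝ) : ℂ) - (starRingEnd ℂ) α)) with hT
  have hTg_diff : DifferentiableOn ℂ (fun ζ => T (g ζ)) (ball 0 1) := by
    apply DifferentiableOn.div
    · exact hd.sub (differentiableOn_const _)
    · exact hd.sub (differentiableOn_const _)
    · intro ζ hζ
      exact T_denom_ne_zero (hm ζ hζ) hαre
  have hTg_maps : MapsTo (fun ζ => T (g ζ)) (ball 0 1) (ball 0 1) := by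
    intro ζ hζ
    rw [mem_ball_zero_iff, Complex.norm_eq_abs]
    exact abs_T_lt_one (hm ζ hζ) hαre
  have hTg0 : (fun ζ => T (g ζ)) η₂ = 0 := by
    simp only [hT, ← hα, sub_self, zero_div]
  have hsp := schwarz_pick_zero hTg_diff hTg_maps h1 h2 hTg0
  -- unpack
  set m := Complex.abs (moeb η₂ η₁) with hm'
  set β := g η₁ with hβ
  have hden : β - (((2*c : ℝ) : ℂ) - (starRingEnd ℂ) α) ≠ 0 := T_denom_ne_zero (hm η₁ hη₁b) hαre
  have habs : Complex.abs (β - α) ≤ m * Complex.abs (β - (((2*c : ℝ) : ℂ) - (starRingEnd ℂ) α)) := by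
    have := hsp
    rw [hT] at this
    simp only at this
    rw [map_div₀, div_le_iff₀ (by rw [Complex.abs.pos_iff]; exact hden)] at this
    linarith [this]
  have htri : Complex.abs (β - (((2*c : ℝ) : ℂ) - (starRingEnd ℂ) α))
      ≤ Complex.abs (β - α) + 2*(c - α.re) := by
    have h4 : β - (((2*c : ℝ) : ℂ) - (starRingEnd ℂ) α) = (β - α) + (α - (((2*c : ℝ) : ℂ) - (starRingEnd ℂ) α)) := by ring
    have h5 : α - (((2*c : ℝ) : ℂ) - (starRingEnd ℂ) α) = ((2*α.re - 2*c : ℝ) : ℂ) := by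
      apply Complex.ext
      · simp [Complex.sub_re, Complex.conj_re]
        ring
      · simp [Complex.sub_im, Complex.conj_im]
    have h6 : Complex.abs (α - (((2*c : ℝ) : ℂ) - (starRingEnd ℂ) α)) = 2*(c - α.re) := by
      rw [h5, Complex.abs_ofReal, abs_of_nonpos (by linarith)]
      ring
    calc Complex.abs (β - (((2*c : ℝ) : ℂ) - (starRingEnd ℂ) α))
        ≤ Complex.abs (β - α) + Complex.abs (α - (((2*c : ℝ) : ℂ) - (starRingEnd ℂ) α)) := by
          rw [h4]; exact Complex.abs.add_le _ _
      _ = Complex.abs (β - α) + 2*(c - α.re) := by rw [h6]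
  have hm0 : 0 ≤ m := Complex.abs.nonneg _
  nlinarith [habs, htri, Complex.abs.nonneg (β - α)]


lemma re_extend {n : ℕ} (f₀ : En n →L[ℝ] ℝ) (x : En n) :
    ((f₀.extendTo𝕜' : En n →L[ℂ] ℂ) x).re = f₀ x := by
  rw [ContinuousLinearMap.extendTo𝕜', ContinuousLinearMap.extendTo𝕜'_apply]
  simp

/-- Key Euclidean estimate along analytic discs in a convex domain:
if `q` is a frontier point on the complex line through `f η₁` and `f η₂`, then
the (Euclidean) distance between the two points is controlled by the pseudo-distance
of the parameters and the distance from `f η₂` to `q`. -/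
lemma key_estimate {n : ℕ} {D : Set (En n)} (hconv : Convex ℝ D) (hopen : IsOpen D)
    {f : ℂ → En n} (hd : DifferentiableOn ℂ f unitDisc) (hmts : MapsTo f unitDisc D)
    {η₁ η₂ : ℂ} (h1 : Complex.abs η₁ < 1) (h2 : Complex.abs η₂ < 1)
    {q : En n} (hq : q ∈ frontier D) {τ : ℂ} (hτ : q - f η₂ = τ • (f η₁ - f η₂)) :
    ‖f η₁ - f η₂‖ * (1 - Complex.abs (moeb η₂ η₁))
      ≤ 2 * Complex.abs (moeb η₂ η₁) * ‖q - f η₂‖ := by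
  have hqD : q ∉ D := by
    rw [hopen.frontier_eq] at hq
    exact hq.2
  have hw : f η₂ ∈ D := hmts (mem_unitDisc.2 h2)
  have hz : f η₁ ∈ D := hmts (mem_unitDisc.2 h1)
  obtain ⟨f₀, u, hfu, hqu⟩ := geometric_hahn_banach_open hconv hopen
    (convex_singleton q) (disjoint_singleton_right.2 hqD)
  have hqu' : u ≤ f₀ q := hqu q rfl
  set Λ : En n →L[ℂ] ℂ := f₀.extendTo𝕜' with hΛ
  set g : ℂ → ℂ := fun ζ => Λ (f ζ) with hg
  have hgd : DifferentiableOn ℂ g unitDisc := Λ.differentiable.comp_differentiableOn hd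
  have hgm : ∀ ζ ∈ ball (0:ℂ) 1, (g ζ).re < u := by
    intro ζ hζ
    rw [hg]
    simp only []
    rw [hΛ, re_extend]
    exact hfu _ (hmts hζ)
  have hest := halfplane_estimate (by simpa [unitDisc] using hgd) hgm h1 h2
  rw [re_extend] at hest
  set m := Complex.abs (moeb η₂ η₁) with hm'
  have hm1 : m < 1 := abs_moeb_lt_one h2 h1
  have hm0 : 0 ≤ m := Complex.abs.nonneg _
  by_cases hzw : f η₁ = f η₂
  · rw [hzw, sub_self, norm_zero, zero_mul]
    positivity
  · -- τ ≠ 0 and Λ (z - w) ≠ 0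
    have hzw' : f η₁ - f η₂ ≠ 0 := sub_ne_zero.2 hzw
    have hgsub : g η₁ - g η₂ = Λ (f η₁ - f η₂) := by
      rw [hg]; simp [map_sub]
    have hΛq : Λ (q - f η₂) = τ * Λ (f η₁ - f η₂) := by
      rw [hτ, map_smul]; simp [smul_eq_mul]
    have hub : u - f₀ (f η₂) ≤ Complex.abs (Λ (q - f η₂)) := by
      have h7 : u - f₀ (f η₂) ≤ f₀ q - f₀ (f η₂) := by linarith
      have h8 : f₀ q - f₀ (f η₂) = (Λ (q - f η₂)).re := by
        rw [hΛ, re_extend]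
        simp [map_sub]
      rw [h8] at h7
      exact h7.trans (Complex.re_le_abs _)
    have hΛzw : Λ (f η₁ - f η₂) ≠ 0 := by
      intro h0
      rw [hΛq, h0, mul_zero] at hub
      simp only [map_zero] at hub
      have := hfu _ hw
      linarith
    have hτ0 : τ ≠ 0 := by
      intro h0
      rw [h0, zero_smul] at hτ
      have : q = f η₂ := by
        have := sub_eq_zero.1 hτ
        exact this
      exact hqD (this ▸ hw)
    -- main chain
    have hchain : Complex.abs (Λ (f η₁ - f η₂)) * (1 - m)
        ≤ 2 * m * (Complex.abs τ * Complex.abs (Λ (f η₁ - f η₂))) := by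
      calc Complex.abs (Λ (f η₁ - f η₂)) * (1 - m)
          = Complex.abs (g η₁ - g η₂) * (1 - m) := by rw [hgsub]
        _ ≤ 2 * m * (u - f₀ (f η₂)) := hest
        _ ≤ 2 * m * Complex.abs (Λ (q - f η₂)) := by
            apply mul_le_mul_of_nonneg_left hub (by positivity)
        _ = 2 * m * (Complex.abs τ * Complex.abs (Λ (f η₁ - f η₂))) := by
            rw [hΛq, map_mul]
    have hΛpos : 0 < Complex.abs (Λ (f η₁ - f η₂)) := Complex.abs.pos hΛzw
    have hfac : 1 - m ≤ 2 * m * Complex.abs τ := by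
      have := hchain
      nlinarith
    have hnorm : ‖q - f η₂‖ = Complex.abs τ * ‖f η₁ - f η₂‖ := by
      rw [hτ, norm_smul, Complex.norm_eq_abs]
    rw [hnorm]
    have hn0 : 0 ≤ ‖f η₁ - f η₂‖ := norm_nonneg _
    calc ‖f η₁ - f η₂‖ * (1 - m) = (1 - m) * ‖f η₁ - f η₂‖ := mul_comm _ _
      _ ≤ (2 * m * Complex.abs τ) * ‖f η₁ - f η₂‖ := mul_le_mul_of_nonneg_right hfac hn0
      _ = 2 * m * (Complex.abs τ * ‖f η₁ - f η₂‖) := by ring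


lemma exists_frontier_on_segment {E : Type*} [NormedAddCommGroup E] [NormedSpace ℝ E]
    {D : Set E} (hopen : IsOpen D) {x p : E} (hx : x ∈ D) (hp : p ∉ D) :
    ∃ σ : ℝ, 0 < σ ∧ σ ≤ 1 ∧ x + σ • (p - x) ∈ frontier D := by
  set γ : ℝ → E := fun σ => x + σ • (p - x) with hγdef
  have hγ : Continuous γ := continuous_const.add (continuous_id.smul continuous_const)
  set T : Set ℝ := {σ : ℝ | σ ∈ Icc (0:ℝ) 1 ∧ γ σ ∉ D} with hT
  have h1T : (1:ℝ) ∈ T := by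
    constructor
    · exact ⟨zero_le_one, le_refl 1⟩
    · simpa [hγdef] using hp
  have hTne : T.Nonempty := ⟨1, h1T⟩
  have hbdd : BddBelow T := ⟨0, fun τ hτ => hτ.1.1⟩
  set σ₀ := sInf T with hσ₀
  have hσ₀le : σ₀ ≤ 1 := csInf_le hbdd h1T
  have hσ₀ge : 0 ≤ σ₀ := le_csInf hTne (fun τ hτ => hτ.1.1)
  have hbelow : ∀ σ : ℝ, 0 ≤ σ → σ < σ₀ → γ σ ∈ D := by
    intro σ hσ0 hσlt
    by_contra hσD
    have : σ₀ ≤ σ := csInf_le hbdd ⟨⟨hσ0, le_trans hσlt.le hσ₀le⟩, hσD⟩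
    linarith
  have hσ₀pos : 0 < σ₀ := by
    have h0 : γ 0 ∈ D := by simpa [hγdef] using hx
    have hnb : γ ⁻¹' D ∈ 𝓝 (0:ℝ) := (hopen.preimage hγ).mem_nhds h0
    obtain ⟨ε, hε, hball⟩ := Metric.mem_nhds_iff.1 hnb
    by_contra hcon
    push_neg at hcon
    obtain ⟨τ, hτT, hτlt⟩ : ∃ τ ∈ T, τ < ε := by
      by_contra hc
      push_neg at hc
      have : ε ≤ σ₀ := le_csInf hTne hc
      linarith
    have : τ ∈ γ ⁻¹' D := hball (by
      rw [Metric.mem_ball, Real.dist_eq, sub_zero, _root_.abs_of_nonneg hτT.1.1]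
      exact hτlt)
    exact hτT.2 this
  have hq_not : γ σ₀ ∉ D := by
    intro hqD
    have hnb : γ ⁻¹' D ∈ 𝓝 σ₀ := (hopen.preimage hγ).mem_nhds hqD
    obtain ⟨ε, hε, hball⟩ := Metric.mem_nhds_iff.1 hnb
    obtain ⟨τ, hτT, hτlt⟩ : ∃ τ ∈ T, τ < σ₀ + ε := by
      by_contra hc
      push_neg at hc
      have : σ₀ + ε ≤ σ₀ := le_csInf hTne hc
      linarith
    have hτge : σ₀ ≤ τ := csInf_le hbdd hτT
    have : τ ∈ γ ⁻¹' D := hball (by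
      rw [Metric.mem_ball, Real.dist_eq, _root_.abs_of_nonneg (by linarith)]
      linarith)
    exact hτT.2 this
  have hq_cl : γ σ₀ ∈ closure D := by
    rw [_root_.mem_closure_iff]
    intro o ho hqo
    have hnb : γ ⁻¹' o ∈ 𝓝 σ₀ := (ho.preimage hγ).mem_nhds hqo
    obtain ⟨ε, hε, hball⟩ := Metric.mem_nhds_iff.1 hnb
    set σ := max (σ₀ - ε/2) (σ₀/2) with hσdef
    have hσlt : σ < σ₀ := by
      apply max_lt <;> [linarith; linarith]
    have hσ0 : 0 ≤ σ := le_trans (by linarith : (0:ℝ) ≤ σ₀/2) (le_max_right _ _)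
    have hσball : σ ∈ Metric.ball σ₀ ε := by
      rw [Metric.mem_ball, Real.dist_eq, _root_.abs_of_nonpos (by linarith)]
      have : σ₀ - ε/2 ≤ σ := le_max_left _ _
      linarith
    exact ⟨γ σ, hball hσball, hbelow σ hσ0 hσlt⟩
  exact ⟨σ₀, hσ₀pos, hσ₀le, by rw [hopen.frontier_eq]; exact ⟨hq_cl, hq_not⟩⟩

lemma no_line_in_closure {n : ℕ} {D : Set (En n)}
    (hD : ¬ ∃ z v : En n, v ≠ 0 ∧ ∀ ζ : ℂ, z + ζ • v ∈ D)
    (hopen : IsOpen D) (hconv : Convex ℝ D) {p₀ : En n} (hp₀ : p₀ ∈ D)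
    {ξ e : En n} (he : e ≠ 0) (hline : ∀ ζ : ℂ, ξ + ζ • e ∈ closure D) : False := by
  apply hD
  refine ⟨(1/2 : ℝ) • p₀ + (1/2 : ℝ) • ξ, e, he, fun ζ => ?_⟩
  have h1 : ξ + (2*ζ) • e ∈ closure D := hline _
  have h2 := hconv.combo_interior_closure_mem_interior
    (by rwa [hopen.interior_eq] : p₀ ∈ interior D) h1
    (by norm_num : (0:ℝ) < 1/2) (by norm_num : (0:ℝ) ≤ 1/2) (by norm_num)
  rw [hopen.interior_eq] at h2
  have h3 : (1/2 : ℝ) • p₀ + (1/2 : ℝ) • (ξ + (2*ζ) • e)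
      = (1/2 : ℝ) • p₀ + (1/2 : ℝ) • ξ + ζ • e := by
    rw [smul_add, ← smul_assoc, add_assoc]
    congr 2
    show (((1/2 : ℝ) • (2*ζ) : ℂ)) • e = ζ • e
    congr 1
    rw [Complex.real_smul]
    push_cast
    ring
  rwa [h3] at h2


/-! ### The disc automorphism `N` fixing `1` and sending `0` to `ζ₀` -/

def uu (ζ₀ : ℂ) : ℂ := (ζ₀ - 1) / (1 - (starRingEnd ℂ) ζ₀)

def bb (ζ₀ : ℂ) : ℂ := (starRingEnd ℂ) ζ₀ * uu ζ₀

def NN (ζ₀ ζ : ℂ) : ℂ := moeb ζ₀ (uu ζ₀ * ζ)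

def EE (ζ₀ ζ : ℂ) : ℂ := (1 - (starRingEnd ℂ) ζ₀) - (starRingEnd ℂ) ζ₀ * (ζ₀ - 1) * ζ

def PP (ζ₀ ζ : ℂ) : ℂ := ζ₀ * (1 - (starRingEnd ℂ) ζ₀) - (ζ₀ - 1) * ζ

section NLemmas

variable {ζ₀ ζ : ℂ}

lemma moeb_denom_eq : (1:ℂ) - (starRingEnd ℂ) ζ₀ * (uu ζ₀ * ζ) = 1 - bb ζ₀ * ζ := by
  rw [bb, mul_assoc]

lemma NN_def' : NN ζ₀ ζ = (ζ₀ - uu ζ₀ * ζ) / (1 - bb ζ₀ * ζ) := by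
  rw [NN, moeb, moeb_denom_eq]

lemma NN_zero : NN ζ₀ 0 = ζ₀ := by
  rw [NN, mul_zero, moeb_zero]

variable (h0 : Complex.abs ζ₀ < 1)
include h0

lemma one_sub_conj_ne : (1:ℂ) - (starRingEnd ℂ) ζ₀ ≠ 0 :=
  one_sub_ne_zero (by rwa [Complex.abs_conj])

lemma one_sub_ζ₀_ne : (1:ℂ) - ζ₀ ≠ 0 := one_sub_ne_zero h0

lemma abs_uu : Complex.abs (uu ζ₀) = 1 := by
  rw [uu, map_div₀]
  rw [Complex.abs.map_sub ζ₀ 1]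
  have : Complex.abs (1 - (starRingEnd ℂ) ζ₀) = Complex.abs (1 - ζ₀) := by
    rw [show (1:ℂ) - (starRingEnd ℂ) ζ₀ = (starRingEnd ℂ) (1 - ζ₀) by simp, Complex.abs_conj]
  rw [this, div_self]
  rw [Complex.abs.ne_zero_iff]
  exact one_sub_ζ₀_ne h0

lemma abs_bb : Complex.abs (bb ζ₀) = Complex.abs ζ₀ := by
  rw [bb, map_mul, abs_uu h0, Complex.abs_conj, mul_one]

lemma hu_rel : uu ζ₀ * (1 - (starRingEnd ℂ) ζ₀) = ζ₀ - 1 := by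
  rw [uu, div_mul_cancel₀]
  exact one_sub_conj_ne h0

lemma one_sub_bb_ne {ζ : ℂ} (hζ : Complex.abs ζ ≤ 1) : (1:ℂ) - bb ζ₀ * ζ ≠ 0 := by
  apply one_sub_ne_zero
  rw [map_mul, abs_bb h0]
  nlinarith [Complex.abs.nonneg ζ, Complex.abs.nonneg ζ₀]

lemma EE_eq : EE ζ₀ ζ = (1 - (starRingEnd ℂ) ζ₀) * (1 - bb ζ₀ * ζ) := by
  rw [EE, bb]
  have h := hu_rel h0
  linear_combination (starRingEnd ℂ) ζ₀ * ζ * h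

lemma EE_ne_zero {ζ : ℂ} (hζ : Complex.abs ζ ≤ 1) : EE ζ₀ ζ ≠ 0 := by
  rw [EE_eq h0]
  exact mul_ne_zero (one_sub_conj_ne h0) (one_sub_bb_ne h0 hζ)

lemma NN_eq_PE {ζ : ℂ} (hζ : Complex.abs ζ ≤ 1) : NN ζ₀ ζ = PP ζ₀ ζ / EE ζ₀ ζ := by
  have hnum : (ζ₀ - uu ζ₀ * ζ) * (1 - (starRingEnd ℂ) ζ₀) = PP ζ₀ ζ := by
    rw [PP]
    linear_combination (-ζ) * hu_rel h0
  rw [NN_def', EE_eq h0,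
    div_eq_div_iff (one_sub_bb_ne h0 hζ) (mul_ne_zero (one_sub_conj_ne h0) (one_sub_bb_ne h0 hζ))]
  linear_combination (1 - bb ζ₀ * ζ) * hnum

lemma NN_mem_disc {ζ : ℂ} (hζ : Complex.abs ζ < 1) : Complex.abs (NN ζ₀ ζ) < 1 := by
  rw [NN]
  apply abs_moeb_lt_one h0
  rwa [map_mul, abs_uu h0, one_mul]

lemma one_sub_NN {ζ : ℂ} (hζ : Complex.abs ζ ≤ 1) :
    1 - NN ζ₀ ζ = (1 - ζ₀) * (1 - (starRingEnd ℂ) ζ₀) * (1 - ζ) / EE ζ₀ ζ := by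
  rw [NN_eq_PE h0 hζ, eq_div_iff (EE_ne_zero h0 hζ), sub_mul,
    div_mul_cancel₀ _ (EE_ne_zero h0 hζ), EE, PP]
  ring

lemma NN_one : NN ζ₀ 1 = 1 := by
  have h := one_sub_NN h0 (le_of_eq (by simp) : Complex.abs (1:ℂ) ≤ 1)
  rw [sub_self, mul_zero, zero_div] at h
  linear_combination -h

lemma normSq_NN {ζ : ℂ} (hζ : Complex.abs ζ ≤ 1) :
    (1 - Complex.normSq (NN ζ₀ ζ)) * Complex.normSq (EE ζ₀ ζ)
      = (1 - Complex.normSq ζ₀) * (1 - Complex.normSq ζ) * Complex.normSq (1 - (starRingEnd ℂ) ζ₀) := by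
  have hden : (1:ℂ) - (starRingEnd ℂ) ζ₀ * (uu ζ₀ * ζ) ≠ 0 := by
    rw [moeb_denom_eq]; exact one_sub_bb_ne h0 hζ
  have h1 := normSq_one_sub_moeb hden
  have h2 : Complex.normSq (uu ζ₀ * ζ) = Complex.normSq ζ := by
    rw [Complex.normSq_mul, ← Complex.sq_abs (uu ζ₀), abs_uu h0]
    norm_num
  have h3 : Complex.normSq (EE ζ₀ ζ)
      = Complex.normSq (1 - (starRingEnd ℂ) ζ₀) * Complex.normSq (1 - (starRingEnd ℂ) ζ₀ * (uu ζ₀ * ζ)) := by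
    rw [EE_eq h0, Complex.normSq_mul, moeb_denom_eq]
  have h4 : Complex.normSq (1 - (starRingEnd ℂ) ζ₀ * (uu ζ₀ * ζ)) ≠ 0 := by
    simpa [Complex.normSq_eq_zero] using hden
  rw [NN, h1, h2, h3]
  have h4' : Complex.normSq (1 - (starRingEnd ℂ) ζ₀ * uu ζ₀ * ζ) ≠ 0 := by rwa [mul_assoc]
  field_simp

lemma NN_diff_identity {ζ₁ ζ₂ : ℂ} (h1 : Complex.abs ζ₁ ≤ 1) (h2 : Complex.abs ζ₂ ≤ 1) :
    (NN ζ₀ ζ₁ - NN ζ₀ ζ₂) * (EE ζ₀ ζ₁ * EE ζ₀ ζ₂)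
      = (ζ₀ - 1) * (1 - ζ₀ * (starRingEnd ℂ) ζ₀) * (ζ₂ - ζ₁) * (1 - (starRingEnd ℂ) ζ₀) := by
  rw [NN_eq_PE h0 h1, NN_eq_PE h0 h2]
  field_simp [EE_ne_zero h0 h1, EE_ne_zero h0 h2]
  rw [PP, PP, EE, EE]
  ring

lemma NN_cross_identity {ζ₁ ζ₂ : ℂ} (h1 : Complex.abs ζ₁ ≤ 1) (h2 : Complex.abs ζ₂ ≤ 1) :
    (1 - (starRingEnd ℂ) (NN ζ₀ ζ₂) * NN ζ₀ ζ₁) * ((starRingEnd ℂ) (EE ζ₀ ζ₂) * EE ζ₀ ζ₁)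
      = (1 - ζ₀ * (starRingEnd ℂ) ζ₀) * (1 - (starRingEnd ℂ) ζ₂ * ζ₁) * (1 - ζ₀) * (1 - (starRingEnd ℂ) ζ₀) := by
  have hE2 : (starRingEnd ℂ) (EE ζ₀ ζ₂) ≠ 0 := by
    simpa using EE_ne_zero h0 h2
  rw [NN_eq_PE h0 h1, NN_eq_PE h0 h2, map_div₀]
  field_simp [EE_ne_zero h0 h1, hE2]
  rw [PP, PP, EE, EE]
  simp only [map_sub, map_mul, map_one, Complex.conj_conj]
  ring

lemma m_invariance {ζ₁ ζ₂ : ℂ} (h1 : Complex.abs ζ₁ < 1) (h2 : Complex.abs ζ₂ < 1) :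
    Complex.abs (NN ζ₀ ζ₁ - NN ζ₀ ζ₂) / Complex.abs (1 - (starRingEnd ℂ) (NN ζ₀ ζ₂) * NN ζ₀ ζ₁)
      = Complex.abs (ζ₁ - ζ₂) / Complex.abs (1 - (starRingEnd ℂ) ζ₂ * ζ₁) := by
  have hN1 : Complex.abs (NN ζ₀ ζ₁) < 1 := NN_mem_disc h0 h1
  have hN2 : Complex.abs (NN ζ₀ ζ₂) < 1 := NN_mem_disc h0 h2
  have hbN : (1:ℂ) - (starRingEnd ℂ) (NN ζ₀ ζ₂) * NN ζ₀ ζ₁ ≠ 0 :=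
    moeb_denom_ne_zero (by nlinarith [Complex.abs.nonneg (NN ζ₀ ζ₁), Complex.abs.nonneg (NN ζ₀ ζ₂)])
  have hb : (1:ℂ) - (starRingEnd ℂ) ζ₂ * ζ₁ ≠ 0 :=
    moeb_denom_ne_zero (by nlinarith [Complex.abs.nonneg ζ₁, Complex.abs.nonneg ζ₂])
  have hE1 : EE ζ₀ ζ₁ ≠ 0 := EE_ne_zero h0 h1.le
  have hE2 : EE ζ₀ ζ₂ ≠ 0 := EE_ne_zero h0 h2.le
  have hA := congrArg Complex.abs (NN_diff_identity h0 h1.le h2.le)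
  have hB := congrArg Complex.abs (NN_cross_identity h0 h1.le h2.le)
  rw [map_mul, map_mul] at hA
  rw [map_mul, map_mul, Complex.abs_conj] at hB
  rw [map_mul, map_mul, map_mul] at hA
  rw [map_mul, map_mul] at hB
  rw [Complex.abs.map_sub ζ₀ 1, Complex.abs.map_sub ζ₂ ζ₁] at hA
  set K := Complex.abs (1 - ζ₀) * Complex.abs (1 - ζ₀ * (starRingEnd ℂ) ζ₀) * Complex.abs (1 - (starRingEnd ℂ) ζ₀) with hK
  have hA' : Complex.abs (NN ζ₀ ζ₁ - NN ζ₀ ζ₂) * (Complex.abs (EE ζ₀ ζ₁) * Complex.abs (EE ζ₀ ζ₂))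
      = K * Complex.abs (ζ₁ - ζ₂) := by rw [hA, hK]; ring
  have hB' : Complex.abs (1 - (starRingEnd ℂ) (NN ζ₀ ζ₂) * NN ζ₀ ζ₁)
        * (Complex.abs (EE ζ₀ ζ₁) * Complex.abs (EE ζ₀ ζ₂))
      = K * Complex.abs (1 - (starRingEnd ℂ) ζ₂ * ζ₁) := by
    rw [mul_comm (Complex.abs (EE ζ₀ ζ₁)) (Complex.abs (EE ζ₀ ζ₂)), hB, map_mul, hK]; ring
  have hEpos : 0 < Complex.abs (EE ζ₀ ζ₁) * Complex.abs (EE ζ₀ ζ₂) :=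
    mul_pos (Complex.abs.pos hE1) (Complex.abs.pos hE2)
  rw [div_eq_div_iff (Complex.abs.ne_zero hbN) (Complex.abs.ne_zero hb)]
  have hgoal : Complex.abs (NN ζ₀ ζ₁ - NN ζ₀ ζ₂) * Complex.abs (1 - (starRingEnd ℂ) ζ₂ * ζ₁)
        * (Complex.abs (EE ζ₀ ζ₁) * Complex.abs (EE ζ₀ ζ₂))
      = Complex.abs (ζ₁ - ζ₂) * Complex.abs (1 - (starRingEnd ℂ) (NN ζ₀ ζ₂) * NN ζ₀ ζ₁)
        * (Complex.abs (EE ζ₀ ζ₁) * Complex.abs (EE ζ₀ ζ₂)) := by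
    calc Complex.abs (NN ζ₀ ζ₁ - NN ζ₀ ζ₂) * Complex.abs (1 - (starRingEnd ℂ) ζ₂ * ζ₁)
          * (Complex.abs (EE ζ₀ ζ₁) * Complex.abs (EE ζ₀ ζ₂))
        = (Complex.abs (NN ζ₀ ζ₁ - NN ζ₀ ζ₂) * (Complex.abs (EE ζ₀ ζ₁) * Complex.abs (EE ζ₀ ζ₂)))
          * Complex.abs (1 - (starRingEnd ℂ) ζ₂ * ζ₁) := by ring
      _ = K * Complex.abs (ζ₁ - ζ₂) * Complex.abs (1 - (starRingEnd ℂ) ζ₂ * ζ₁) := by rw [hA']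
      _ = Complex.abs (ζ₁ - ζ₂) * (K * Complex.abs (1 - (starRingEnd ℂ) ζ₂ * ζ₁)) := by ring
      _ = Complex.abs (ζ₁ - ζ₂) * (Complex.abs (1 - (starRingEnd ℂ) (NN ζ₀ ζ₂) * NN ζ₀ ζ₁)
            * (Complex.abs (EE ζ₀ ζ₁) * Complex.abs (EE ζ₀ ζ₂))) := by rw [hB']
      _ = Complex.abs (ζ₁ - ζ₂) * Complex.abs (1 - (starRingEnd ℂ) (NN ζ₀ ζ₂) * NN ζ₀ ζ₁)
          * (Complex.abs (EE ζ₀ ζ₁) * Complex.abs (EE ζ₀ ζ₂)) := by ring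
  exact mul_right_cancel₀ (ne_of_gt hEpos) hgoal

lemma poincare_NN {ζ₁ ζ₂ : ℂ} (h1 : Complex.abs ζ₁ < 1) (h2 : Complex.abs ζ₂ < 1) :
    poincareDist (NN ζ₀ ζ₁) (NN ζ₀ ζ₂) = poincareDist ζ₁ ζ₂ := by
  simp only [poincareDist, Complex.norm_eq_abs]
  rw [m_invariance h0 h1 h2]

end NLemmas

lemma abs_moeb_eq {η₁ η₂ : ℂ} :
    Complex.abs (moeb η₂ η₁)
      = Complex.abs (η₁ - η₂) / Complex.abs (1 - (starRingEnd ℂ) η₂ * η₁) := by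
  rw [moeb, map_div₀, Complex.abs.map_sub η₂ η₁]


section NCont

variable {ζ₀ : ℂ} (h0 : Complex.abs ζ₀ < 1)

lemma one_sub_abs_le (w : ℂ) : 1 - Complex.abs w ≤ Complex.abs (1 - w) := by
  have h := Complex.abs.add_le (1 - w) w
  simp only [sub_add_cancel, map_one] at h
  linarith

include h0

lemma hasDerivAt_NN {ζ : ℂ} (hζ : (1:ℂ) - bb ζ₀ * ζ ≠ 0) :
    HasDerivAt (NN ζ₀) ((bb ζ₀ * ζ₀ - uu ζ₀) / (1 - bb ζ₀ * ζ)^2) ζ := by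
  have hfun : NN ζ₀ = fun ζ => (ζ₀ - uu ζ₀ * ζ) / (1 - bb ζ₀ * ζ) :=
    funext (fun ζ => NN_def')
  rw [hfun]
  have hnum : HasDerivAt (fun ζ : ℂ => ζ₀ - uu ζ₀ * ζ) (-(uu ζ₀)) ζ := by
    simpa using ((hasDerivAt_id ζ).const_mul (uu ζ₀)).const_sub ζ₀
  have hden : HasDerivAt (fun ζ : ℂ => 1 - bb ζ₀ * ζ) (-(bb ζ₀)) ζ := by
    simpa using ((hasDerivAt_id ζ).const_mul (bb ζ₀)).const_sub 1
  have h := hnum.div hden hζ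
  exact h.congr_deriv (by ring)

lemma EE_one : EE ζ₀ 1 = 1 - (Complex.normSq ζ₀ : ℂ) := by
  rw [EE, ← Complex.mul_conj]
  ring

lemma continuousAt_NN_one : ContinuousAt (fun t : ℝ => NN ζ₀ (t:ℂ)) 1 := by
  have hne : (1:ℂ) - bb ζ₀ * ((1:ℝ):ℂ) ≠ 0 := by
    rw [Complex.ofReal_one, mul_one]
    apply one_sub_ne_zero
    rwa [abs_bb h0]
  have heq : (fun t : ℝ => NN ζ₀ (t:ℂ))
      = fun t : ℝ => (ζ₀ - uu ζ₀ * (t:ℂ)) / (1 - bb ζ₀ * (t:ℂ)) := by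
    funext t; exact NN_def'
  rw [heq]
  exact ContinuousAt.div
    (continuousAt_const.sub (continuousAt_const.mul Complex.continuous_ofReal.continuousAt))
    (continuousAt_const.sub (continuousAt_const.mul Complex.continuous_ofReal.continuousAt)) hne

lemma continuousAt_absNN_one : ContinuousAt (fun t : ℝ => Complex.abs (NN ζ₀ (t:ℂ))) 1 :=
  Complex.continuous_abs.continuousAt.comp (continuousAt_NN_one h0)

lemma absNN_one : Complex.abs (NN ζ₀ ((1:ℝ):ℂ)) = 1 := by
  rw [Complex.ofReal_one, NN_one h0, map_one]

/-- The curve `t ↦ N(t)` is asymptotic to the radius: the Möbius quotient between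
`N(t)` and its modulus tends to `0` as `t → 1⁻`. -/
lemma tendsto_mcurve :
    Tendsto (fun t : ℝ =>
        Complex.abs (moeb ((Complex.abs (NN ζ₀ (t:ℂ)) : ℝ) : ℂ) (NN ζ₀ (t:ℂ))))
      (𝓝[<] (1:ℝ)) (𝓝 0) := by
  set c := (starRingEnd ℂ) ζ₀ with hc
  set Nf : ℝ → ℂ := fun t => NN ζ₀ (t:ℂ) with hNf
  set sf : ℝ → ℝ := fun t => Complex.abs (Nf t) with hsf
  set Ef : ℝ → ℂ := fun t => EE ζ₀ (t:ℂ) with hEf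
  have hEcont : Continuous Ef := by
    have heq : Ef = fun t : ℝ => (1 - c) - c * (ζ₀ - 1) * (t:ℂ) := by
      funext t
      simp only [hEf]
      rw [EE, hc]
    rw [heq]
    exact continuous_const.sub (continuous_const.mul Complex.continuous_ofReal)
  have hE1 : Ef 1 = 1 - (Complex.normSq ζ₀ : ℂ) := by
    simp only [hEf]
    rw [Complex.ofReal_one]
    exact EE_one h0
  have hnsq0R : (1:ℝ) - Complex.normSq ζ₀ ≠ 0 := by
    have := normSq_lt_one_iff.2 h0
    linarith
  have hnsq0 : (1:ℂ) - (Complex.normSq ζ₀ : ℂ) ≠ 0 := by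
    intro h
    apply hnsq0R
    have : ((1 - Complex.normSq ζ₀ : ℝ) : ℂ) = 0 := by push_cast; linear_combination h
    exact_mod_cast this
  have hnsq1cR : Complex.normSq (1 - c) ≠ 0 := by
    intro h
    exact one_sub_conj_ne h0 (Complex.normSq_eq_zero.1 h)
  have hnsq1c : (Complex.normSq (1 - c) : ℂ) ≠ 0 := by exact_mod_cast hnsq1cR
  set Gn : ℝ → ℂ := fun t => (1 - ζ₀) * (1 - c) * (1 + ((sf t : ℝ):ℂ))
      * ((Complex.normSq (Ef t) : ℝ):ℂ) with hGn
  set Gd : ℝ → ℂ := fun t => Ef t * (1 - (Complex.normSq ζ₀ : ℂ))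
      * (1 + ((t : ℝ):ℂ)) * ((Complex.normSq (1 - c) : ℝ):ℂ) with hGd
  set G : ℝ → ℂ := fun t => Gn t / Gd t with hG
  have hsf1 : ContinuousAt sf 1 := continuousAt_absNN_one h0
  have hsfval : sf 1 = 1 := absNN_one h0
  have hGncont : ContinuousAt Gn 1 := by
    apply ContinuousAt.mul
    · exact continuousAt_const.mul
        (continuousAt_const.add (Complex.continuous_ofReal.continuousAt.comp hsf1))
    · exact Complex.continuous_ofReal.continuousAt.comp
        ((Complex.continuous_normSq.comp hEcont).continuousAt)
  have hGdcont : ContinuousAt Gd 1 := by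
    apply ContinuousAt.mul
    · apply ContinuousAt.mul
      · exact hEcont.continuousAt.mul continuousAt_const
      · exact continuousAt_const.add
          (Complex.continuous_ofReal.continuousAt.comp continuous_id.continuousAt)
    · exact continuousAt_const
  have hGd1 : Gd 1 = (1 - (Complex.normSq ζ₀ : ℂ)) * (1 - (Complex.normSq ζ₀ : ℂ))
      * 2 * ((Complex.normSq (1 - c) : ℝ):ℂ) := by
    have : Gd 1 = Ef 1 * (1 - (Complex.normSq ζ₀ : ℂ)) * (1 + ((1:ℝ):ℂ))
        * ((Complex.normSq (1 - c) : ℝ):ℂ) := rfl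
    rw [this, hE1]
    norm_num
  have hGdne : Gd 1 ≠ 0 := by
    rw [hGd1]
    exact mul_ne_zero (mul_ne_zero (mul_ne_zero hnsq0 hnsq0) (by norm_num)) hnsq1c
  have hGn1 : Gn 1 = (1 - ζ₀) * (1 - c) * 2 * (((1 - Complex.normSq ζ₀)^2 : ℝ):ℂ) := by
    have : Gn 1 = (1 - ζ₀) * (1 - c) * (1 + ((sf 1 : ℝ):ℂ))
        * ((Complex.normSq (Ef 1) : ℝ):ℂ) := rfl
    rw [this, hsfval, hE1]
    have hns : Complex.normSq (1 - (Complex.normSq ζ₀ : ℂ)) = (1 - Complex.normSq ζ₀)^2 := by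
      have : (1:ℂ) - (Complex.normSq ζ₀ : ℂ) = ((1 - Complex.normSq ζ₀ : ℝ):ℂ) := by push_cast; ring
      rw [this, Complex.normSq_ofReal]
      ring
    rw [hns]
    norm_num
  have hGlim : Tendsto G (𝓝[<] (1:ℝ)) (𝓝 1) := by
    have h := Tendsto.div (hGncont.tendsto) (hGdcont.tendsto) hGdne
    have hval : Gn 1 / Gd 1 = 1 := by
      rw [div_eq_one_iff_eq hGdne, hGn1, hGd1]
      have hc1 : ((Complex.normSq (1 - c) : ℝ):ℂ) = (1 - c) * (1 - ζ₀) := by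
        rw [← Complex.mul_conj]
        congr 1
        simp [hc]
      rw [hc1]
      push_cast
      ring
    rw [hval] at h
    exact h.mono_left nhdsWithin_le_nhds
  have hGlim0 : Tendsto (fun t => Complex.abs (1 - G t)) (𝓝[<] (1:ℝ)) (𝓝 0) := by
    have h : Tendsto (fun t => (1:ℂ) - G t) (𝓝[<] (1:ℝ)) (𝓝 (1 - 1)) :=
      tendsto_const_nhds.sub hGlim
    have h2 := (Complex.continuous_abs.tendsto _).comp h
    simpa [Function.comp_def] using h2
  apply squeeze_zero' (Eventually.of_forall (fun t => Complex.abs.nonneg _)) _ hGlim0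
  have hev : ∀ᶠ t in 𝓝[<] (1:ℝ), t ∈ Ioo (0:ℝ) 1 :=
    Ioo_mem_nhdsLT_of_mem (by norm_num : (1:ℝ) ∈ Ioc (0:ℝ) 1)
  filter_upwards [hev] with t ht
  have htabs : Complex.abs ((t:ℝ):ℂ) ≤ 1 := by
    rw [Complex.abs_ofReal, _root_.abs_of_nonneg ht.1.le]
    exact ht.2.le
  have htlt : Complex.abs ((t:ℝ):ℂ) < 1 := by
    rw [Complex.abs_ofReal, _root_.abs_of_nonneg ht.1.le]
    exact ht.2
  have hsflt : sf t < 1 := NN_mem_disc h0 htlt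
  have hsfnn : 0 ≤ sf t := Complex.abs.nonneg _
  have hEne : Ef t ≠ 0 := EE_ne_zero h0 htabs
  have hGdtne : Gd t ≠ 0 := by
    have h2 : Gd t = Ef t * (1 - (Complex.normSq ζ₀ : ℂ)) * (1 + ((t:ℝ):ℂ))
        * ((Complex.normSq (1 - c) : ℝ):ℂ) := rfl
    rw [h2]
    have ht1 : (1:ℂ) + ((t:ℝ):ℂ) ≠ 0 := by
      intro h
      have : (1 + t : ℝ) = 0 := by exact_mod_cast (by push_cast at h ⊢; linear_combination h : ((1+t:ℝ):ℂ) = 0)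
      linarith [ht.1]
    exact mul_ne_zero (mul_ne_zero (mul_ne_zero hEne hnsq0) ht1) hnsq1c
  -- the key algebraic identity
  have h1C : (1 - Nf t) * Ef t = (1 - ζ₀) * (1 - c) * (1 - (t:ℂ)) := by
    rw [hNf, hEf]
    simp only []
    rw [one_sub_NN h0 htabs, div_mul_cancel₀ _ (EE_ne_zero h0 htabs)]
  have h2R : (1 - Complex.normSq (Nf t)) * Complex.normSq (Ef t)
      = (1 - Complex.normSq ζ₀) * (1 - Complex.normSq ((t:ℝ):ℂ)) * Complex.normSq (1 - c) :=
    normSq_NN h0 htabs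
  have h2C : (1 - ((sf t:ℝ):ℂ)^2) * ((Complex.normSq (Ef t) : ℝ):ℂ)
      = (1 - (Complex.normSq ζ₀ : ℂ)) * (1 - ((t:ℝ):ℂ)^2) * ((Complex.normSq (1 - c) : ℝ):ℂ) := by
    have hsq : Complex.normSq (Nf t) = sf t^2 := by
      rw [hsf]; exact (Complex.sq_abs _).symm
    have hts : Complex.normSq ((t:ℝ):ℂ) = t^2 := by
      rw [Complex.normSq_ofReal]; ring
    rw [hsq, hts] at h2R
    have := congrArg (fun x : ℝ => (x:ℂ)) h2R
    push_cast at this ⊢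
    linear_combination this
  have hkey : (1 - Nf t) * Gd t = Gn t * (1 - ((sf t:ℝ):ℂ)) := by
    have hGdt : Gd t = Ef t * (1 - (Complex.normSq ζ₀ : ℂ)) * (1 + ((t:ℝ):ℂ))
        * ((Complex.normSq (1 - c) : ℝ):ℂ) := rfl
    have hGnt : Gn t = (1 - ζ₀) * (1 - c) * (1 + ((sf t:ℝ):ℂ))
        * ((Complex.normSq (Ef t) : ℝ):ℂ) := rfl
    rw [hGdt, hGnt]
    linear_combination ((1 - (Complex.normSq ζ₀ : ℂ)) * (1 + ((t:ℝ):ℂ))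
      * ((Complex.normSq (1 - c) : ℝ):ℂ)) * h1C - ((1 - ζ₀) * (1 - c)) * h2C
  have hsfCne : (1:ℂ) - ((sf t:ℝ):ℂ) ≠ 0 := by
    intro h
    have : ((1 - sf t : ℝ):ℂ) = 0 := by push_cast; linear_combination h
    have : (1 - sf t : ℝ) = 0 := by exact_mod_cast this
    linarith
  have h1N : 1 - Nf t = G t * (1 - ((sf t:ℝ):ℂ)) := by
    have hGt : G t = Gn t / Gd t := rfl
    rw [hGt, div_mul_eq_mul_div, eq_div_iff hGdtne]
    linear_combination hkey
  have hnum_eq : Complex.abs (Nf t - ((sf t:ℝ):ℂ)) = Complex.abs (1 - G t) * (1 - sf t) := by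
    have heq : Nf t - ((sf t:ℝ):ℂ) = (1 - G t) * (1 - ((sf t:ℝ):ℂ)) := by
      linear_combination -h1N
    rw [heq, map_mul]
    congr 1
    rw [show (1:ℂ) - ((sf t:ℝ):ℂ) = ((1 - sf t:ℝ):ℂ) by push_cast; ring,
      Complex.abs_ofReal, _root_.abs_of_pos (by linarith)]
  have habsN : Complex.abs (Nf t) = sf t := rfl
  have hden_ge : (1 - sf t) ≤ Complex.abs (1 - ((sf t:ℝ):ℂ) * Nf t) := by
    have h := one_sub_abs_le (((sf t:ℝ):ℂ) * Nf t)
    rw [map_mul, Complex.abs_ofReal, _root_.abs_of_nonneg hsfnn, habsN] at h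
    nlinarith
  have hmoebC : Complex.abs (moeb ((sf t:ℝ):ℂ) (Nf t))
      = Complex.abs (Nf t - ((sf t:ℝ):ℂ)) / Complex.abs (1 - ((sf t:ℝ):ℂ) * Nf t) := by
    rw [abs_moeb_eq, Complex.conj_ofReal]
  rw [hmoebC, hnum_eq]
  rw [div_le_iff₀ (by linarith : (0:ℝ) < Complex.abs (1 - ((sf t:ℝ):ℂ) * Nf t))]
  exact mul_le_mul_of_nonneg_left hden_ge (Complex.abs.nonneg _)

omit h0 in
lemma abs_one_sub_le_two {w : ℂ} (hw : Complex.abs w ≤ 1) : Complex.abs (1 - w) ≤ 2 := by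
  have h := Complex.abs.add_le 1 (-w)
  rw [map_one, Complex.abs.map_neg] at h
  have heq : (1:ℂ) - w = 1 + -w := by ring
  rw [heq]
  linarith

/-- The constant in the Stolz-angle comparison for `N`. -/
def CC (ζ₀ : ℂ) : ℝ :=
  8 * Complex.abs (1 - ζ₀) / ((1 - Complex.abs ζ₀) * (1 - Complex.abs ζ₀ ^ 2))

lemma CC_pos : 0 < CC ζ₀ := by
  have h1 : 0 < Complex.abs (1 - ζ₀) := Complex.abs.pos (one_sub_ζ₀_ne h0)
  have h2 : 0 < 1 - Complex.abs ζ₀ := by linarith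
  have h3 : 0 < 1 - Complex.abs ζ₀ ^ 2 := by nlinarith [Complex.abs.nonneg ζ₀]
  rw [CC]
  positivity

lemma uu_sub_bb : uu ζ₀ - bb ζ₀ = ζ₀ - 1 := by
  rw [bb]
  have h := hu_rel h0
  linear_combination h

lemma one_sub_NN_mul {ζ : ℂ} (hζ : Complex.abs ζ ≤ 1) :
    (1 - NN ζ₀ ζ) * (1 - bb ζ₀ * ζ) = (1 - ζ₀) * (1 - ζ) := by
  rw [NN_def', sub_mul, one_mul, div_mul_cancel₀ _ (one_sub_bb_ne h0 hζ)]
  linear_combination ζ * uu_sub_bb h0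

lemma normSq_NN_mul {ζ : ℂ} (hζ : Complex.abs ζ ≤ 1) :
    (1 - Complex.normSq (NN ζ₀ ζ)) * Complex.normSq (1 - bb ζ₀ * ζ)
      = (1 - Complex.normSq ζ₀) * (1 - Complex.normSq ζ) := by
  have h1 := normSq_NN h0 hζ
  have h2 : Complex.normSq (EE ζ₀ ζ)
      = Complex.normSq (1 - (starRingEnd ℂ) ζ₀) * Complex.normSq (1 - bb ζ₀ * ζ) := by
    rw [EE_eq h0, Complex.normSq_mul]
  rw [h2] at h1
  have hcpos : Complex.normSq (1 - (starRingEnd ℂ) ζ₀) ≠ 0 := by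
    intro h
    exact one_sub_conj_ne h0 (Complex.normSq_eq_zero.1 h)
  apply mul_right_cancel₀ hcpos
  linear_combination h1

lemma NN_maps_stolz {M : ℝ} (hM : 1 < M) {ζ : ℂ} (hζ : ζ ∈ stolzAt 1 M) :
    NN ζ₀ ζ ∈ stolzAt 1 (max (M * CC ζ₀) 2) := by
  obtain ⟨hζd', hζs⟩ := hζ
  have hζd : Complex.abs ζ < 1 := mem_unitDisc.1 hζd'
  have haζ : 0 ≤ Complex.abs ζ := Complex.abs.nonneg ζ
  have haζ₀ : 0 ≤ Complex.abs ζ₀ := Complex.abs.nonneg ζ₀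
  have hN : Complex.abs (NN ζ₀ ζ) < 1 := NN_mem_disc h0 hζd
  have hNnn : 0 ≤ Complex.abs (NN ζ₀ ζ) := Complex.abs.nonneg _
  refine ⟨mem_unitDisc.2 hN, ?_⟩
  have hbζ : Complex.abs (bb ζ₀ * ζ) ≤ Complex.abs ζ₀ := by
    rw [map_mul, abs_bb h0]
    nlinarith
  have hb2 : 1 - Complex.abs ζ₀ ≤ Complex.abs (1 - bb ζ₀ * ζ) := by
    have := one_sub_abs_le (bb ζ₀ * ζ)
    linarith
  have hb3 : Complex.abs (1 - bb ζ₀ * ζ) ≤ 2 :=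
    abs_one_sub_le_two (by nlinarith)
  have hBnn : 0 ≤ Complex.abs (1 - bb ζ₀ * ζ) := Complex.abs.nonneg _
  have hmulid : Complex.abs (1 - NN ζ₀ ζ) * Complex.abs (1 - bb ζ₀ * ζ)
      = Complex.abs (1 - ζ₀) * Complex.abs (1 - ζ) := by
    have h := congrArg Complex.abs (one_sub_NN_mul h0 hζd.le)
    rwa [map_mul, map_mul] at h
  have hnsqid := normSq_NN_mul h0 hζd.le
  rw [← Complex.sq_abs, ← Complex.sq_abs, ← Complex.sq_abs, ← Complex.sq_abs] at hnsqid
  have hp1 : 0 < 1 - Complex.abs ζ₀ := by linarith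
  have hp2 : 0 < 1 - Complex.abs ζ₀ ^ 2 := by nlinarith
  have hs4 : (1 - Complex.abs ζ₀ ^ 2) * (1 - Complex.abs ζ) ≤ 8 * (1 - Complex.abs (NN ζ₀ ζ)) := by
    have t1 : (1 - Complex.abs ζ₀ ^ 2) * (1 - Complex.abs ζ)
        ≤ (1 - Complex.abs ζ₀ ^ 2) * (1 - Complex.abs ζ ^ 2) := by
      nlinarith [mul_nonneg hp2.le (by nlinarith : (0:ℝ) ≤ Complex.abs ζ - Complex.abs ζ ^ 2)]
    have t2 : (1 - Complex.abs (NN ζ₀ ζ) ^ 2) * Complex.abs (1 - bb ζ₀ * ζ) ^ 2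
        ≤ (1 - Complex.abs (NN ζ₀ ζ) ^ 2) * 4 := by
      nlinarith [mul_nonneg (by nlinarith : (0:ℝ) ≤ 1 - Complex.abs (NN ζ₀ ζ) ^ 2)
        (by nlinarith : (0:ℝ) ≤ 4 - Complex.abs (1 - bb ζ₀ * ζ) ^ 2)]
    have t3 : (1 - Complex.abs (NN ζ₀ ζ) ^ 2) * 4 ≤ 8 * (1 - Complex.abs (NN ζ₀ ζ)) := by nlinarith
    linarith [hnsqid ▸ t1]
  have habs1ζ₀ : 0 < Complex.abs (1 - ζ₀) := Complex.abs.pos (one_sub_ζ₀_ne h0)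
  have hXnn : 0 ≤ Complex.abs (1 - NN ζ₀ ζ) := Complex.abs.nonneg _
  have c1 : Complex.abs (1 - NN ζ₀ ζ) * (1 - Complex.abs ζ₀)
      ≤ Complex.abs (1 - ζ₀) * Complex.abs (1 - ζ) := by nlinarith
  have hmain : Complex.abs (1 - NN ζ₀ ζ) * ((1 - Complex.abs ζ₀) * (1 - Complex.abs ζ₀ ^ 2))
      < 8 * M * Complex.abs (1 - ζ₀) * (1 - Complex.abs (NN ζ₀ ζ)) := by
    have d1 : Complex.abs (1 - NN ζ₀ ζ) * (1 - Complex.abs ζ₀) * (1 - Complex.abs ζ₀ ^ 2)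
        ≤ Complex.abs (1 - ζ₀) * Complex.abs (1 - ζ) * (1 - Complex.abs ζ₀ ^ 2) :=
      mul_le_mul_of_nonneg_right c1 hp2.le
    have d2 : Complex.abs (1 - ζ₀) * Complex.abs (1 - ζ) * (1 - Complex.abs ζ₀ ^ 2)
        < Complex.abs (1 - ζ₀) * (M * (1 - Complex.abs ζ)) * (1 - Complex.abs ζ₀ ^ 2) := by
      have := mul_lt_mul_of_pos_left hζs habs1ζ₀
      exact mul_lt_mul_of_pos_right this hp2
    have d3 : Complex.abs (1 - ζ₀) * (M * (1 - Complex.abs ζ)) * (1 - Complex.abs ζ₀ ^ 2)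
        ≤ Complex.abs (1 - ζ₀) * M * (8 * (1 - Complex.abs (NN ζ₀ ζ))) := by
      have hAM : 0 ≤ Complex.abs (1 - ζ₀) * M := by nlinarith
      calc Complex.abs (1 - ζ₀) * (M * (1 - Complex.abs ζ)) * (1 - Complex.abs ζ₀ ^ 2)
          = (Complex.abs (1 - ζ₀) * M) * ((1 - Complex.abs ζ₀ ^ 2) * (1 - Complex.abs ζ)) := by ring
        _ ≤ (Complex.abs (1 - ζ₀) * M) * (8 * (1 - Complex.abs (NN ζ₀ ζ))) :=
            mul_le_mul_of_nonneg_left hs4 hAM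
        _ = Complex.abs (1 - ζ₀) * M * (8 * (1 - Complex.abs (NN ζ₀ ζ))) := by ring
    calc Complex.abs (1 - NN ζ₀ ζ) * ((1 - Complex.abs ζ₀) * (1 - Complex.abs ζ₀ ^ 2))
        = Complex.abs (1 - NN ζ₀ ζ) * (1 - Complex.abs ζ₀) * (1 - Complex.abs ζ₀ ^ 2) := by ring
      _ ≤ Complex.abs (1 - ζ₀) * Complex.abs (1 - ζ) * (1 - Complex.abs ζ₀ ^ 2) := d1
      _ < Complex.abs (1 - ζ₀) * (M * (1 - Complex.abs ζ)) * (1 - Complex.abs ζ₀ ^ 2) := d2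
      _ ≤ Complex.abs (1 - ζ₀) * M * (8 * (1 - Complex.abs (NN ζ₀ ζ))) := d3
      _ = 8 * M * Complex.abs (1 - ζ₀) * (1 - Complex.abs (NN ζ₀ ζ)) := by ring
  have hfin : Complex.abs (1 - NN ζ₀ ζ) < M * CC ζ₀ * (1 - Complex.abs (NN ζ₀ ζ)) := by
    rw [CC]
    rw [show M * (8 * Complex.abs (1 - ζ₀) / ((1 - Complex.abs ζ₀) * (1 - Complex.abs ζ₀ ^ 2)))
        * (1 - Complex.abs (NN ζ₀ ζ))
      = 8 * M * Complex.abs (1 - ζ₀) * (1 - Complex.abs (NN ζ₀ ζ))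
        / ((1 - Complex.abs ζ₀) * (1 - Complex.abs ζ₀ ^ 2)) by ring]
    rw [lt_div_iff₀ (mul_pos hp1 hp2)]
    exact hmain
  calc Complex.abs (1 - NN ζ₀ ζ) < M * CC ζ₀ * (1 - Complex.abs (NN ζ₀ ζ)) := hfin
    _ ≤ max (M * CC ζ₀) 2 * (1 - Complex.abs (NN ζ₀ ζ)) :=
      mul_le_mul_of_nonneg_right (le_max_left _ _) (by linarith)

lemma continuousAt_NN_one' : ContinuousAt (NN ζ₀) 1 := by
  have hne : (1:ℂ) - bb ζ₀ * 1 ≠ 0 := by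
    rw [mul_one]
    apply one_sub_ne_zero
    rwa [abs_bb h0]
  have heq : NN ζ₀ = fun ζ : ℂ => (ζ₀ - uu ζ₀ * ζ) / (1 - bb ζ₀ * ζ) :=
    funext (fun ζ => NN_def')
  rw [heq]
  exact ContinuousAt.div
    (continuousAt_const.sub (continuousAt_const.mul continuous_id.continuousAt))
    (continuousAt_const.sub (continuousAt_const.mul continuous_id.continuousAt)) hne

lemma tendsto_NN_stolz {M : ℝ} (hM : 1 < M) :
    Tendsto (NN ζ₀) (𝓝[stolzAt 1 M] 1) (𝓝[stolzAt 1 (max (M * CC ζ₀) 2)] (1:ℂ)) := by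
  rw [tendsto_nhdsWithin_iff]
  constructor
  · have h := (continuousAt_NN_one' h0).tendsto
    rw [NN_one h0] at h
    exact h.mono_left nhdsWithin_le_nhds
  · filter_upwards [self_mem_nhdsWithin] with ζ hζ
    exact NN_maps_stolz h0 hM hζ

lemma deriv_value_one :
    (bb ζ₀ * ζ₀ - uu ζ₀) / (1 - bb ζ₀ * 1)^2
      = ((Complex.abs (1 - ζ₀)^2 / (1 - Complex.abs ζ₀^2) : ℝ) : ℂ) := by
  have hcne : (1:ℂ) - (starRingEnd ℂ) ζ₀ ≠ 0 := one_sub_conj_ne h0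
  have h1 : ((Complex.abs (1 - ζ₀)^2 : ℝ) : ℂ) = (1 - ζ₀) * (starRingEnd ℂ) (1 - ζ₀) := by
    rw [Complex.sq_abs, Complex.mul_conj]
  have h2 : ((1 - Complex.abs ζ₀^2 : ℝ) : ℂ) = 1 - ζ₀ * (starRingEnd ℂ) ζ₀ := by
    rw [show (1 - Complex.abs ζ₀^2 : ℝ) = 1 - Complex.normSq ζ₀ by rw [Complex.sq_abs]]
    push_cast
    rw [← Complex.mul_conj]
  have h3 : (1:ℂ) - ζ₀ * (starRingEnd ℂ) ζ₀ ≠ 0 := by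
    apply one_sub_ne_zero
    rw [map_mul, Complex.abs_conj]
    nlinarith [Complex.abs.nonneg ζ₀]
  have h4 : (1:ℂ) - bb ζ₀ * 1 ≠ 0 := by
    rw [mul_one]
    apply one_sub_ne_zero
    rwa [abs_bb h0]
  have hb1 : (1:ℂ) - bb ζ₀ = (1 - ζ₀ * (starRingEnd ℂ) ζ₀) / (1 - (starRingEnd ℂ) ζ₀) := by
    rw [bb, uu]
    field_simp
    ring
  have hbu : bb ζ₀ * ζ₀ - uu ζ₀
      = -((ζ₀ - 1) * (1 - (starRingEnd ℂ) ζ₀ * ζ₀)) / (1 - (starRingEnd ℂ) ζ₀) := by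
    rw [bb, uu]
    field_simp
    ring
  rw [Complex.ofReal_div, h1, h2]
  simp only [map_sub, map_one]
  rw [mul_one, div_eq_div_iff (pow_ne_zero 2 (by rwa [mul_one] at h4)) h3, hbu, hb1]
  field_simp
  ring

end NCont


lemma real_smul_eq {n : ℕ} (r : ℝ) (v : En n) : r • v = ((r:ℂ)) • v := by
  rw [show ((r:ℂ)) = r • (1:ℂ) by simp [Complex.real_smul], smul_one_smul]

lemma tendsto_sf_within {ζ₀ : ℂ} (h0 : Complex.abs ζ₀ < 1) :
    Tendsto (fun t : ℝ => Complex.abs (NN ζ₀ (t:ℂ))) (𝓝[<] (1:ℝ)) (𝓝[<] (1:ℝ)) := by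
  rw [tendsto_nhdsWithin_iff]
  constructor
  · have h := (continuousAt_absNN_one h0).tendsto
    rw [absNN_one h0] at h
    exact h.mono_left nhdsWithin_le_nhds
  · filter_upwards [Ioo_mem_nhdsLT_of_mem (by norm_num : (1:ℝ) ∈ Ioc (-1:ℝ) 1)] with t ht
    have : Complex.abs ((t:ℝ):ℂ) < 1 := by
      rw [Complex.abs_ofReal, abs_lt]
      exact ⟨ht.1, ht.2⟩
    exact NN_mem_disc h0 this

/-- **Endpoint transfer**: if `φ : 𝔻 → D` is holomorphic into a ℂ-proper convex domain and
has radial limit `ξ` at `1`, then `φ ∘ N` also has radial limit `ξ` at `1`. -/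
lemma endpoint_transfer {n : ℕ} {D : Set (En n)} (hD : IsCProperConvex D)
    {φ : ℂ → En n} (hdiff : DifferentiableOn ℂ φ unitDisc) (hmap : MapsTo φ unitDisc D)
    {ξ : En n} (hφe : Tendsto (fun t : ℝ => φ ((t:ℝ):ℂ)) (𝓝[<] (1:ℝ)) (𝓝 ξ))
    {ζ₀ : ℂ} (h0 : Complex.abs ζ₀ < 1) :
    Tendsto (fun t : ℝ => φ (NN ζ₀ (t:ℂ))) (𝓝[<] (1:ℝ)) (𝓝 ξ) := by
  obtain ⟨⟨p₀, hp₀⟩, hopen, hconv, hnoline⟩ := hD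
  have hwlim : Tendsto (fun t : ℝ => φ ((Complex.abs (NN ζ₀ (t:ℂ)) : ℝ):ℂ))
      (𝓝[<] (1:ℝ)) (𝓝 ξ) := hφe.comp (tendsto_sf_within h0)
  have hmlim := tendsto_mcurve h0
  suffices hdiff0 : Tendsto (fun t : ℝ => φ (NN ζ₀ (t:ℂ))
      - φ ((Complex.abs (NN ζ₀ (t:ℂ)) : ℝ):ℂ)) (𝓝[<] (1:ℝ)) (𝓝 0) by
    have h := hdiff0.add hwlim
    simp only [sub_add_cancel, zero_add] at h
    exact h
  rw [tendsto_iff_seq_tendsto]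
  intro x hx
  by_contra hcon
  -- abbreviations
  set Nk : ℕ → ℂ := fun k => NN ζ₀ ((x k : ℝ):ℂ) with hNk
  set sk : ℕ → ℂ := fun k => ((Complex.abs (Nk k) : ℝ):ℂ) with hsk
  set zk : ℕ → En n := fun k => φ (Nk k) with hzk
  set wk : ℕ → En n := fun k => φ (sk k) with hwk
  set mk : ℕ → ℝ := fun k => Complex.abs (moeb (sk k) (Nk k)) with hmk
  have hwklim : Tendsto wk atTop (𝓝 ξ) := hwlim.comp hx
  have hmklim : Tendsto mk atTop (𝓝 0) := hmlim.comp hx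
  have hxIoo : ∀ᶠ k in atTop, x k ∈ Ioo (0:ℝ) 1 :=
    hx (Ioo_mem_nhdsLT_of_mem (by norm_num : (1:ℝ) ∈ Ioc (0:ℝ) 1))
  -- get ε and a subsequence on which the difference is large
  obtain ⟨ε, hε, hfreq⟩ : ∃ ε : ℝ, 0 < ε ∧ ∃ᶠ k in atTop, ε ≤ ‖zk k - wk k‖ := by
    rw [NormedAddCommGroup.tendsto_nhds_zero] at hcon
    push_neg at hcon
    obtain ⟨ε, hε, h⟩ := hcon
    refine ⟨ε, hε, ?_⟩
    simp only [Filter.not_eventually, ← not_lt] at h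
    exact h.mono (fun k hk => not_lt.1 hk)
  obtain ⟨κ, hκmono, hκ⟩ := extraction_of_frequently_atTop (hfreq.and_eventually hxIoo)
  have hκε : ∀ j, ε ≤ ‖zk (κ j) - wk (κ j)‖ := fun j => (hκ j).1
  have hκx : ∀ j, x (κ j) ∈ Ioo (0:ℝ) 1 := fun j => (hκ j).2
  have hNdisc : ∀ j, Complex.abs (Nk (κ j)) < 1 := by
    intro j
    apply NN_mem_disc h0
    rw [Complex.abs_ofReal, _root_.abs_of_nonneg (hκx j).1.le]
    exact (hκx j).2
  have hsdisc : ∀ j, Complex.abs (sk (κ j)) < 1 := by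
    intro j
    rw [hsk]
    simp only []
    rw [Complex.abs_ofReal, _root_.abs_of_nonneg (Complex.abs.nonneg _)]
    exact hNdisc j
  have hzD : ∀ j, zk (κ j) ∈ D := fun j => hmap (mem_unitDisc.2 (hNdisc j))
  have hwD : ∀ j, wk (κ j) ∈ D := fun j => hmap (mem_unitDisc.2 (hsdisc j))
  have hyne : ∀ j, zk (κ j) - wk (κ j) ≠ 0 := by
    intro j h
    have := hκε j
    rw [h, norm_zero] at this
    linarith
  -- normalized directions
  set ej : ℕ → En n := fun j => (‖zk (κ j) - wk (κ j)‖⁻¹ : ℝ) • (zk (κ j) - wk (κ j)) with hej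
  have hejs : ∀ j, ej j ∈ sphere (0 : En n) 1 := by
    intro j
    rw [mem_sphere_zero_iff_norm, hej]
    simp only [norm_smul, norm_inv, norm_norm]
    rw [inv_mul_cancel₀ (norm_ne_zero_iff.2 (hyne j))]
  obtain ⟨eLim, heLims, θ, hθmono, hθlim⟩ :=
    (isCompact_sphere (0 : En n) 1).tendsto_subseq hejs
  have heLim : eLim ≠ 0 := by
    rw [mem_sphere_zero_iff_norm] at heLims
    intro h
    rw [h, norm_zero] at heLims
    norm_num at heLims
  -- the two index data along κ∘θ
  have hwι : Tendsto (fun j => wk (κ (θ j))) atTop (𝓝 ξ) :=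
    (hwklim.comp hκmono.tendsto_atTop).comp hθmono.tendsto_atTop
  have hmι : Tendsto (fun j => mk (κ (θ j))) atTop (𝓝 0) :=
    (hmklim.comp hκmono.tendsto_atTop).comp hθmono.tendsto_atTop
  -- the colinear-frontier predicate
  set P : ℕ → ℝ → Prop := fun j R => ∃ q ∈ frontier D,
    ‖q - wk (κ (θ j))‖ ≤ R ∧ ∃ τ : ℂ, q - wk (κ (θ j)) = τ • (zk (κ (θ j)) - wk (κ (θ j))) with hP
  by_cases hcase : ∃ R : ℕ, ∃ᶠ j in atTop, P j R
  · -- Case A : colinear frontier points at bounded distance occur frequently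
    obtain ⟨R, hR⟩ := hcase
    have hmev : ∀ᶠ j in atTop, mk (κ (θ j)) < min (1/2) (ε / (8 * (R + 1))) := by
      apply hmι.eventually_lt_const
      apply lt_min (by norm_num)
      positivity
    obtain ⟨j, hPj, hmj⟩ := (hR.and_eventually hmev).exists
    obtain ⟨q, hqf, hqR, τ, hqτ⟩ := hPj
    -- apply the key estimate
    have hkey0 := key_estimate hconv hopen hdiff hmap (hNdisc (θ j)) (hsdisc (θ j)) hqf hqτ
    have hkey : ‖zk (κ (θ j)) - wk (κ (θ j))‖ * (1 - mk (κ (θ j)))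
        ≤ 2 * mk (κ (θ j)) * ‖q - wk (κ (θ j))‖ := hkey0
    have hm0 : 0 ≤ mk (κ (θ j)) := Complex.abs.nonneg _
    have hm12 : mk (κ (θ j)) ≤ 1/2 := (le_min_iff.1 hmj.le).1
    have hmR : mk (κ (θ j)) < ε / (8 * (R + 1)) := lt_min_iff.1 hmj |>.2
    have hq0 : 0 ≤ ‖q - wk (κ (θ j))‖ := norm_nonneg _
    have hRnn : (0:ℝ) ≤ R := Nat.cast_nonneg R
    have hchain : ε / 2 ≤ 2 * mk (κ (θ j)) * (R:ℝ) := by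
      have h1 : ε * (1 - mk (κ (θ j))) ≤ ‖zk (κ (θ j)) - wk (κ (θ j))‖ * (1 - mk (κ (θ j))) :=
        mul_le_mul_of_nonneg_right (hκε (θ j)) (by linarith)
      have h2 : 2 * mk (κ (θ j)) * ‖q - wk (κ (θ j))‖ ≤ 2 * mk (κ (θ j)) * R :=
        mul_le_mul_of_nonneg_left hqR (by linarith)
      nlinarith
    have : 2 * mk (κ (θ j)) * (R:ℝ) < ε / 2 := by
      have h3 : 2 * mk (κ (θ j)) * (R:ℝ) ≤ 2 * (ε / (8 * (R + 1))) * (R:ℝ) := by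
        apply mul_le_mul_of_nonneg_right _ hRnn
        linarith
      have hfrac : (R:ℝ)/(4*((R:ℝ)+1)) < 1/2 := by
        rw [div_lt_iff₀ (by positivity)]
        nlinarith
      have h4 : 2 * (ε / (8 * ((R:ℝ) + 1))) * (R:ℝ) < ε / 2 := by
        calc 2 * (ε / (8 * ((R:ℝ) + 1))) * (R:ℝ) = ε * ((R:ℝ)/(4*((R:ℝ)+1))) := by
              have h8 : ((R:ℝ)+1) ≠ 0 := by positivity
              field_simp
              ring
          _ < ε * (1/2) := by exact mul_lt_mul_of_pos_left hfrac hε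
          _ = ε / 2 := by ring
      linarith
    linarith
  · -- Case B : arbitrarily large discs inside `D`, contradiction with ℂ-properness
    push_neg at hcase
    have hnotP : ∀ R : ℕ, ∀ᶠ j in atTop, ¬ P j R := by
      intro R
      have := hcase R
      simpa only [Filter.not_frequently] using this
    have hline : ∀ ζ : ℂ, ξ + ζ • eLim ∈ closure D := by
      intro ζ
      rw [Metric.mem_closure_iff]
      intro δ hδ
      set R : ℕ := ⌈Complex.abs ζ⌉₊ + 1 with hRdef
      have hRζ : Complex.abs ζ ≤ R := by
        rw [hRdef]
        push_cast
        linarith [Nat.le_ceil (Complex.abs ζ)]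
      have hev1 : ∀ᶠ j in atTop, ¬ P j R := hnotP R
      have hev2 : ∀ᶠ j in atTop, ‖wk (κ (θ j)) - ξ‖ < δ/2 := by
        have h := hwι
        rw [tendsto_iff_norm_sub_tendsto_zero] at h
        exact h.eventually_lt_const (by linarith)
      have hev3 : ∀ᶠ j in atTop, ‖ej (θ j) - eLim‖ < δ / (2 * (Complex.abs ζ + 1)) := by
        have h := hθlim
        rw [tendsto_iff_norm_sub_tendsto_zero] at h
        apply h.eventually_lt_const
        positivity
      obtain ⟨j, hj1, hj2, hj3⟩ := (hev1.and (hev2.and hev3)).exists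
      set w := wk (κ (θ j)) with hw
      set y := zk (κ (θ j)) - wk (κ (θ j)) with hy
      set p := w + ζ • ej (θ j) with hp
      have hpD : p ∈ D := by
        by_contra hpD
        apply hj1
        obtain ⟨σ, hσ0, hσ1, hqf⟩ := exists_frontier_on_segment hopen (hwD (θ j)) hpD
        refine ⟨w + σ • (p - w), hqf, ?_, ?_⟩
        · have hpw : p - w = ζ • ej (θ j) := by rw [hp]; abel
          rw [add_sub_cancel_left, hpw, norm_smul, norm_smul, Complex.norm_eq_abs]
          rw [mem_sphere_zero_iff_norm.1 (hejs (θ j))]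
          rw [Real.norm_eq_abs, _root_.abs_of_pos hσ0]
          calc σ * (Complex.abs ζ * 1) ≤ 1 * (Complex.abs ζ * 1) := by
                apply mul_le_mul_of_nonneg_right hσ1
                positivity
            _ ≤ R := by rw [one_mul, mul_one]; exact hRζ
        · refine ⟨(σ:ℂ) * ζ * ((‖y‖⁻¹ : ℝ):ℂ), ?_⟩
          have hpw : p - w = ζ • ej (θ j) := by rw [hp]; abel
          have hejy : ej (θ j) = (‖y‖⁻¹ : ℝ) • y := rfl
          rw [add_sub_cancel_left, hpw, hejy]
          rw [real_smul_eq σ, real_smul_eq (‖y‖⁻¹)]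
          rw [smul_smul, smul_smul]
      refine ⟨p, hpD, ?_⟩
      rw [dist_eq_norm]
      have hsplit : ξ + ζ • eLim - p = (ξ - w) + ζ • (eLim - ej (θ j)) := by
        rw [hp, smul_sub]
        abel
      rw [hsplit]
      calc ‖(ξ - w) + ζ • (eLim - ej (θ j))‖
          ≤ ‖ξ - w‖ + ‖ζ • (eLim - ej (θ j))‖ := norm_add_le _ _
        _ = ‖ξ - w‖ + Complex.abs ζ * ‖eLim - ej (θ j)‖ := by
            rw [norm_smul, Complex.norm_eq_abs]
        _ < δ/2 + Complex.abs ζ * ‖eLim - ej (θ j)‖ := by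
            have h := hj2
            rw [norm_sub_rev] at h
            linarith
        _ ≤ δ/2 + Complex.abs ζ * (δ / (2 * (Complex.abs ζ + 1))) := by
            have h := hj3
            rw [norm_sub_rev] at h
            have : 0 ≤ Complex.abs ζ := Complex.abs.nonneg ζ
            nlinarith
        _ < δ := by
            have hpos : 0 < Complex.abs ζ + 1 := by positivity
            have : Complex.abs ζ * (δ / (2 * (Complex.abs ζ + 1))) < δ/2 := by
              rw [mul_div_assoc']
              rw [div_lt_iff₀ (by positivity)]
              nlinarith [Complex.abs.nonneg ζ]
            linarith
    exact no_line_in_closure hnoline hopen hconv hp₀ heLim hline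


lemma herm_smul {n : ℕ} (c : ℂ) (v w : En n) : herm (c • v) w = c * herm v w := by
  rw [herm, herm, Finset.mul_sum]
  congr 1
  funext j
  have : (c • v) j = c * v j := rfl
  rw [this]
  ring

end Stmt2Aux

open Stmt2Aux

/-- along a complex geodesic `φ` with endpoint `ξ`,
`Ω_ξ(φ(ζ)) = −(1−|ζ|²)/(|1−ζ|² · φ'_N(1))` for every `ζ ∈ 𝔻`. -/
theorem stmt2 {n : ℕ} (D : Set (En n)) (hD : IsCProperConvex D)
    (ξ : En n) (hξ : IsLocallyFiniteType D ξ)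
    (nξ : En n) (hn : IsOuterUnitNormal D ξ nξ)
    (φ : ℂ → En n) (hφ : IsComplexGeodesic D φ) (hφe : HasEndpoint φ ξ)
    (a : ℝ) (ha : 0 < a)
    (hφa : NTLim (fun ζ => herm (deriv φ ζ) nξ) 1 (a : ℂ))
    (Ω : En n → ℝ) (hΩ : IsPoissonKernel D ξ nξ Ω) :
    ∀ ζ ∈ unitDisc,
      Ω (φ ζ) = -(1 - ‖ζ‖ ^ 2) / (‖1 - ζ‖ ^ 2 * a) := by
  intro ζ₀ hζ₀
  simp only [Complex.norm_eq_abs]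
  have h0 : Complex.abs ζ₀ < 1 := mem_unitDisc.1 hζ₀
  obtain ⟨hφd, hφm, hφk⟩ := hφ
  set N : ℂ → ℂ := NN ζ₀ with hN
  have hNmaps : MapsTo N unitDisc unitDisc := fun w hw =>
    mem_unitDisc.2 (NN_mem_disc h0 (mem_unitDisc.1 hw))
  have hNdiff : DifferentiableOn ℂ N unitDisc := by
    intro w hw
    exact ((hasDerivAt_NN h0 (one_sub_bb_ne h0
      (mem_unitDisc.1 hw).le)).differentiableAt).differentiableWithinAt
  set ψ : ℂ → En n := fun w => φ (N w) with hψ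
  have hψgeo : IsComplexGeodesic D ψ := by
    refine ⟨hφd.comp hNdiff hNmaps, fun w hw => hφm (hNmaps hw), ?_⟩
    intro ζ₁ h₁ ζ₂ h₂
    have h := hφk (N ζ₁) (hNmaps h₁) (N ζ₂) (hNmaps h₂)
    have h2 : kob D (ψ ζ₁) (ψ ζ₂) = poincareDist (N ζ₁) (N ζ₂) := h
    rw [h2, hN]
    exact poincare_NN h0 (mem_unitDisc.1 h₁) (mem_unitDisc.1 h₂)
  have hψ0 : ψ 0 = φ ζ₀ := by
    show φ (N 0) = φ ζ₀
    have hN0 : N 0 = ζ₀ := NN_zero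
    rw [hN0]
  have hψe : HasEndpoint ψ ξ := endpoint_transfer hD hφd hφm hφe h0
  set K : ℝ := Complex.abs (1 - ζ₀)^2 / (1 - Complex.abs ζ₀^2) with hK
  have hA : 0 < Complex.abs (1 - ζ₀)^2 := by
    have := Complex.abs.pos (one_sub_ζ₀_ne h0)
    positivity
  have hB : 0 < 1 - Complex.abs ζ₀^2 := by nlinarith [Complex.abs.nonneg ζ₀, h0]
  have hKpos : 0 < K := div_pos hA hB
  have ha' : 0 < a * K := mul_pos ha hKpos
  have hNT : NTLim (fun w => herm (deriv ψ w) nξ) 1 ((a * K : ℝ) : ℂ) := by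
    intro M hM
    have hM' : 1 < max (M * CC ζ₀) 2 := lt_of_lt_of_le one_lt_two (le_max_right _ _)
    set DD : ℂ → ℂ := fun w => (bb ζ₀ * ζ₀ - uu ζ₀) / (1 - bb ζ₀ * w)^2 with hDD
    have hevent : ∀ᶠ w in 𝓝[stolzAt 1 M] (1:ℂ),
        (fun w => herm (deriv ψ w) nξ) w = DD w * herm (deriv φ (N w)) nξ := by
      filter_upwards [self_mem_nhdsWithin] with w hw
      have hwmem : w ∈ unitDisc := hw.1
      have hwd : Complex.abs w < 1 := mem_unitDisc.1 hwmem
      have hNw : HasDerivAt N (DD w) w := hasDerivAt_NN h0 (one_sub_bb_ne h0 hwd.le)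
      have hφat : DifferentiableAt ℂ φ (N w) :=
        (hφd (N w) (hNmaps hwmem)).differentiableAt
          ((Metric.isOpen_ball : IsOpen unitDisc).mem_nhds (hNmaps hwmem))
      have hcomp : HasDerivAt ψ (DD w • deriv φ (N w)) w :=
        HasDerivAt.scomp w hφat.hasDerivAt hNw
      show herm (deriv ψ w) nξ = DD w * herm (deriv φ (N w)) nξ
      rw [hcomp.deriv]
      exact herm_smul _ _ _
    have hDDlim : Tendsto DD (𝓝[stolzAt 1 M] (1:ℂ)) (𝓝 ((K : ℝ) : ℂ)) := by
      have hne : ((1:ℂ) - bb ζ₀ * 1)^2 ≠ 0 := by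
        apply pow_ne_zero
        rw [mul_one]
        apply one_sub_ne_zero
        rwa [abs_bb h0]
      have hcont : ContinuousAt DD 1 := by
        apply ContinuousAt.div continuousAt_const
        · exact ((continuousAt_const.sub (continuousAt_const.mul
            continuous_id.continuousAt)).pow 2)
        · exact hne
      have hval : DD 1 = ((K : ℝ) : ℂ) := by
        show (bb ζ₀ * ζ₀ - uu ζ₀) / (1 - bb ζ₀ * 1)^2 = ((K : ℝ) : ℂ)
        rw [hK]
        exact deriv_value_one h0
      have := hcont.tendsto
      rw [hval] at this
      exact this.mono_left nhdsWithin_le_nhds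
    have hhermlim : Tendsto (fun w => herm (deriv φ (N w)) nξ)
        (𝓝[stolzAt 1 M] (1:ℂ)) (𝓝 ((a : ℝ) : ℂ)) :=
      (hφa _ hM').comp (tendsto_NN_stolz h0 hM)
    have hprod := hDDlim.mul hhermlim
    have hvaleq : ((K : ℝ) : ℂ) * ((a : ℝ) : ℂ) = ((a * K : ℝ) : ℂ) := by
      push_cast
      ring
    rw [hvaleq] at hprod
    exact hprod.congr' (hevent.mono (fun w hw => hw.symm))
  have hres := hΩ (φ ζ₀) (hφm hζ₀) ψ hψgeo hψ0 hψe (a * K) ha' hNT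
  rw [hres]
  have hane : a ≠ 0 := ne_of_gt ha
  have hAne : Complex.abs (1 - ζ₀)^2 ≠ 0 := ne_of_gt hA
  have hBne : (1 : ℝ) - Complex.abs ζ₀^2 ≠ 0 := ne_of_gt hB
  rw [div_eq_div_iff (ne_of_gt ha') (by positivity : (0:ℝ) < Complex.abs (1 - ζ₀)^2 * a).ne']
  rw [hK]
  field_simp
end
end
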